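/- arXiv:1408.2631 — 6 statements merged into one kernel-verified Lean document; each statement's English description precedes it below -/
import Mathlib

section
/- Let (s_t)_{t≥0} be a semigroup of isometries on a Hilbert C*-module E. Define E_u := ⋂_{t≥0} s_t E. Then E_u is a closed submodule with s_t E_u = E_u for all t ≥ 0, and for any closed submodule E' with s_t E' = E' for all t ≥ 0, one has E' ⊆ E_u. -/
open scoped RightActions
open MeasureTheory Filter Topology

noncomputable section

/-- The Hilbert C⋆-module class as defined in the older Mathlib (right `Aᵐᵒᵖ`-action). -/
class CStarModuleOld (A E : Type*) [NonUnitalSemiring A] [StarRing A] [Module ℂ A]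
    [AddCommGroup E] [Module ℂ E] [PartialOrder A] [SMul Aᵐᵒᵖ E] [Norm A] [Norm E]
    extends Inner A E where
  inner_add_right {x} {y} {z} : inner x (y + z) = inner x y + inner x z
  inner_self_nonneg {x} : 0 ≤ inner x x
  inner_self {x} : inner x x = 0 ↔ x = 0
  inner_op_smul_right {a : A} {x y : E} : inner x (y <• a) = inner x y * a
  inner_smul_right_complex {z : ℂ} {x} {y} : inner x (z • y) = z • inner x y
  star_inner x y : star (inner x y) = inner y x
  norm_eq_sqrt_norm_inner_self x : ‖x‖ = √‖inner x x‖

variable {A E : Type*} [CStarAlgebra A] [PartialOrder A] [StarOrderedRing A]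
  [NormedAddCommGroup E] [NormedSpace ℂ E] [SMul Aᵐᵒᵖ E] [CStarModuleOld A E]

local notation "⟪" x ", " y "⟫" => (inner A x y : A)

variable (A) in
/-- Orthogonal complement of a subset of a Hilbert C*-module. -/
def ortho (F : Set E) : Set E := {x : E | ∀ y ∈ F, ⟪y, x⟫ = 0}

theorem maximal_unitary_part
    [CompleteSpace E]
    (s : ℝ → E →ₗ[ℂ] E)
    (hs0 : s 0 = LinearMap.id)
    (hsg : ∀ r t : ℝ, 0 ≤ r → 0 ≤ t → s (r + t) = (s r).comp (s t))
    (hiso : ∀ t : ℝ, 0 ≤ t → ∀ x y : E, ⟪s t x, s t y⟫ = ⟪x, y⟫) :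
    IsClosed (⋂ t ∈ Set.Ici (0 : ℝ), Set.range (s t)) ∧
    (∃ Fu : Submodule ℂ E, (Fu : Set E) = ⋂ t ∈ Set.Ici (0 : ℝ), Set.range (s t)) ∧
    (∀ t : ℝ, 0 ≤ t →
      s t '' (⋂ r ∈ Set.Ici (0 : ℝ), Set.range (s r)) = ⋂ r ∈ Set.Ici (0 : ℝ), Set.range (s r)) ∧
    (∀ F : Submodule ℂ E, IsClosed (F : Set E) → (∀ (a : A), ∀ x ∈ F, x <• a ∈ F) →
      (∀ t : ℝ, 0 ≤ t → s t '' (F : Set E) = (F : Set E)) →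
      (F : Set E) ⊆ ⋂ t ∈ Set.Ici (0 : ℝ), Set.range (s t)) := by
  have hnorm : ∀ t : ℝ, 0 ≤ t → ∀ x : E, ‖s t x‖ = ‖x‖ := by
    intro t ht x
    rw [CStarModuleOld.norm_eq_sqrt_norm_inner_self (A := A),
      CStarModuleOld.norm_eq_sqrt_norm_inner_self (A := A) (x := x), hiso t ht]
  have hIsom : ∀ t : ℝ, 0 ≤ t → Isometry (s t) := fun t ht =>
    AddMonoidHomClass.isometry_of_norm (s t) (hnorm t ht)
  have hinj : ∀ t : ℝ, 0 ≤ t → Function.Injective (s t) := fun t ht =>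
    (hIsom t ht).injective
  have key : ∀ a b : ℝ, 0 ≤ a → 0 ≤ b → ∀ z : E, s (a + b) z = s a (s b z) := by
    intro a b ha hb z; rw [hsg a b ha hb]; rfl
  refine ⟨?_, ?_, ?_, ?_⟩
  · exact isClosed_biInter fun t ht => ((hIsom t ht).isClosedEmbedding).isClosed_range
  · refine ⟨⨅ t ∈ Set.Ici (0 : ℝ), LinearMap.range (s t), ?_⟩
    ext x
    simp [Submodule.mem_iInf, LinearMap.mem_range, Set.mem_range]
  · intro t ht
    apply Set.Subset.antisymm
    · rintro y ⟨x, hx, rfl⟩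
      simp only [Set.mem_iInter, Set.mem_Ici] at hx ⊢
      intro r hr
      rcases le_or_gt r t with h | h
      · refine ⟨s (t - r) x, ?_⟩
        rw [← key r (t - r) hr (by linarith), show r + (t - r) = t by ring]
      · obtain ⟨z, rfl⟩ := hx (r - t) (by linarith)
        refine ⟨z, ?_⟩
        rw [← key t (r - t) ht (by linarith), show t + (r - t) = r by ring]
    · intro x hx
      simp only [Set.mem_iInter, Set.mem_Ici] at hx
      obtain ⟨y, rfl⟩ := hx t ht
      refine ⟨y, ?_, rfl⟩
      simp only [Set.mem_iInter, Set.mem_Ici]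
      intro r hr
      obtain ⟨z, hz⟩ := hx (t + r) (by linarith)
      rw [key t r ht hr] at hz
      exact ⟨z, hinj t ht hz⟩
  · intro F _ _ hF x hx
    simp only [Set.mem_iInter, Set.mem_Ici]
    intro t ht
    rw [← hF t ht] at hx
    obtain ⟨y, _, rfl⟩ := hx
    exact ⟨y, rfl⟩
end
end

section
/- Let (s_t)_{t≥0} be a semigroup of adjointable isometries on a Hilbert C*-module E and let E_p be the closure of ⋃_{r≥0} (s_r E)^⊥. Then each s_t^* maps E_p into E_p, and the restriction of (s_t) to E_p is pure: s_t^* y → 0 as t → ∞ for every y ∈ E_p. -/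
open scoped RightActions
open MeasureTheory Filter Topology

noncomputable section

variable {A E : Type*} [CStarAlgebra A] [PartialOrder A] [StarOrderedRing A]
  [NormedAddCommGroup E] [NormedSpace ℂ E] [SMul Aᵐᵒᵖ E] [CStarModuleOld A E]

local notation "⟪" x ", " y "⟫" => (inner A x y : A)

theorem restriction_to_pure_part_is_pure
    [CompleteSpace E]
    (s sa : ℝ → E →ₗ[ℂ] E)
    (hs0 : s 0 = LinearMap.id)
    (hsg : ∀ r t : ℝ, 0 ≤ r → 0 ≤ t → s (r + t) = (s r).comp (s t))
    (hiso : ∀ t : ℝ, 0 ≤ t → ∀ x y : E, ⟪s t x, s t y⟫ = ⟪x, y⟫)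
    (hadj : ∀ t : ℝ, 0 ≤ t → ∀ x y : E, ⟪s t x, y⟫ = ⟪x, sa t y⟫) :
    (∀ t : ℝ, 0 ≤ t →
      sa t '' closure (⋃ r ∈ Set.Ici (0 : ℝ), ortho A (Set.range (s r))) ⊆
        closure (⋃ r ∈ Set.Ici (0 : ℝ), ortho A (Set.range (s r)))) ∧
    (∀ y ∈ closure (⋃ r ∈ Set.Ici (0 : ℝ), ortho A (Set.range (s r))),
      Tendsto (fun t : ℝ => sa t y) atTop (𝓝 0)) := by
  set U : Set E := ⋃ r ∈ Set.Ici (0 : ℝ), ortho A (Set.range (s r)) with hU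
  -- elements with zero inner products against everything vanish
  have hext : ∀ z : E, (∀ x : E, ⟪x, z⟫ = 0) → z = 0 := fun z hz =>
    CStarModuleOld.inner_self.mp (hz z)
  -- s t is isometric
  have hnorm_s : ∀ t : ℝ, 0 ≤ t → ∀ x : E, ‖s t x‖ = ‖x‖ := by
    intro t ht x
    rw [CStarModuleOld.norm_eq_sqrt_norm_inner_self (A := A),
      CStarModuleOld.norm_eq_sqrt_norm_inner_self (A := A) x, hiso t ht x x]
  -- sa t is a contraction
  have hsa_le : ∀ t : ℝ, 0 ≤ t → ∀ y : E, ‖sa t y‖ ≤ ‖y‖ := by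
    intro t ht y
    have h1 : ⟪sa t y, sa t y⟫ = ⟪s t (sa t y), y⟫ := (hadj t ht (sa t y) y).symm
    have hsubr : ∀ x u v : E, ⟪x, u - v⟫ = ⟪x, u⟫ - ⟪x, v⟫ := by
      intro x u v
      have := CStarModuleOld.inner_add_right (A := A) (x := x) (y := u - v) (z := v)
      rw [sub_add_cancel] at this
      rw [this, add_sub_cancel_right]
    have hsubl : ∀ x u v : E, ⟪u - v, x⟫ = ⟪u, x⟫ - ⟪v, x⟫ := by
      intro x u v
      rw [← CStarModuleOld.star_inner, hsubr, star_sub, CStarModuleOld.star_inner,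
        CStarModuleOld.star_inner]
    have hP1 : ⟪s t (sa t y), y⟫ = ⟪sa t y, sa t y⟫ := h1.symm
    have hP2 : ⟪y, s t (sa t y)⟫ = ⟪sa t y, sa t y⟫ := by
      rw [← CStarModuleOld.star_inner, hP1, CStarModuleOld.star_inner]
    have hP3 : ⟪s t (sa t y), s t (sa t y)⟫ = ⟪sa t y, sa t y⟫ := hiso t ht _ _
    have key : ⟪y - s t (sa t y), y - s t (sa t y)⟫ = ⟪y, y⟫ - ⟪sa t y, sa t y⟫ := by
      rw [hsubl, hsubr, hsubr, hP1, hP2, hP3]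
      abel
    have h2 : ⟪sa t y, sa t y⟫ ≤ ⟪y, y⟫ := by
      rw [← sub_nonneg, ← key]
      exact CStarModuleOld.inner_self_nonneg
    rw [CStarModuleOld.norm_eq_sqrt_norm_inner_self (A := A) (sa t y),
      CStarModuleOld.norm_eq_sqrt_norm_inner_self (A := A) y]
    exact Real.sqrt_le_sqrt
      (CStarAlgebra.norm_le_norm_of_nonneg_of_le CStarModuleOld.inner_self_nonneg h2)
  have hcont : ∀ t : ℝ, 0 ≤ t → Continuous (sa t) := fun t ht =>
    AddMonoidHomClass.continuous_of_bound (sa t) 1 (fun x => by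
      simpa using hsa_le t ht x)
  -- semigroup composition identity
  have hcomp : ∀ a b : ℝ, 0 ≤ a → 0 ≤ b → ∀ x : E, s (a + b) x = s a (s b x) := by
    intro a b ha hb x
    rw [hsg a b ha hb]; rfl
  -- sa t kills ortho (range (s r)) for t ≥ r
  have hkill : ∀ r : ℝ, 0 ≤ r → ∀ z ∈ ortho A (Set.range (s r)),
      ∀ t : ℝ, r ≤ t → sa t z = 0 := by
    intro r hr z hz t hrt
    have ht : (0 : ℝ) ≤ t := hr.trans hrt
    apply hext
    intro x
    rw [← hadj t ht x z]
    have hx : s t x = s r (s (t - r) x) := by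
      rw [← hcomp r (t - r) hr (by linarith), show r + (t - r) = t by ring]
    rw [hx]
    exact hz _ ⟨_, rfl⟩
  -- sa t maps the union into itself
  have hmapU : ∀ t : ℝ, 0 ≤ t → ∀ z ∈ U, sa t z ∈ U := by
    intro t ht z hz
    simp only [hU, Set.mem_iUnion, Set.mem_Ici] at hz ⊢
    obtain ⟨r, hr, hz⟩ := hz
    rcases le_total r t with h | h
    · refine ⟨0, le_refl 0, ?_⟩
      rw [hkill r hr z hz t h]
      intro y _
      have := CStarModuleOld.inner_add_right (A := A) (x := y) (y := (0 : E)) (z := 0)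
      simpa using this
    · refine ⟨r - t, by linarith, ?_⟩
      rintro w ⟨x, rfl⟩
      rw [← hadj t ht (s (r - t) x) z]
      have hx : s t (s (r - t) x) = s r x := by
        rw [← hcomp t (r - t) ht (by linarith), show t + (r - t) = r by ring]
      rw [hx]
      exact hz _ ⟨x, rfl⟩
  constructor
  · intro t ht
    calc sa t '' closure U ⊆ closure (sa t '' U) :=
          image_closure_subset_closure_image (hcont t ht)
      _ ⊆ closure U := closure_mono (Set.image_subset_iff.mpr (hmapU t ht))
  · intro y hy
    rw [Metric.tendsto_atTop]
    intro ε hε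
    obtain ⟨z, hzU, hzy⟩ := Metric.mem_closure_iff.mp hy (ε / 2) (by linarith)
    simp only [hU, Set.mem_iUnion, Set.mem_Ici] at hzU
    obtain ⟨r, hr, hz⟩ := hzU
    refine ⟨max r 0, fun t htN => ?_⟩
    have ht : (0 : ℝ) ≤ t := le_trans (le_max_right r 0) htN
    have hzt := hkill r hr z hz t (le_trans (le_max_left r 0) htN)
    have hy' : sa t y = sa t (y - z) := by rw [map_sub, hzt, sub_zero]
    rw [dist_zero_right, hy']
    calc ‖sa t (y - z)‖ ≤ ‖y - z‖ := hsa_le t ht _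
      _ = dist y z := (dist_eq_norm y z).symm
      _ < ε := by linarith
end
end

section
/- Let (s_t)_{t≥0} be a semigroup of adjointable isometries on a Hilbert C*-module E and let p_{a,b} := s_a s_a^* − s_b s_b^*, E_{a,b} := p_{a,b}E. For t ≥ 0 and 0 ≤ a < b, s_t restricts to a unitary from E_{a,b} onto E_{a+t, b+t}, with inverse given by the restriction of s_t^* to E_{a+t,b+t}. -/
open scoped RightActions
open MeasureTheory Filter Topology

noncomputable section

variable {A E : Type*} [CStarAlgebra A] [PartialOrder A] [StarOrderedRing A]
  [NormedAddCommGroup E] [NormedSpace ℂ E] [SMul A E] [CStarModule A E]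

local notation "⟪" x ", " y "⟫" => (inner A x y : A)

/-- The spectral projection family `p_{c,d} := s_c s_c^* - s_d s_d^*`, with the
convention `p_{c,d} := 0` for `c > d`. -/
def pab {E : Type*} [NormedAddCommGroup E] [NormedSpace ℂ E]
    (s sa : ℝ → E →ₗ[ℂ] E) (c d : ℝ) : E →ₗ[ℂ] E :=
  if c ≤ d then (s c).comp (sa c) - (s d).comp (sa d) else 0

/-- Extensionality via the inner product. -/
lemma ext_of_inner (u v : E) (h : ∀ y : E, ⟪ y, u ⟫ = ⟪ y, v ⟫) : u = v := by
  have h2 : ⟪ u - v, u - v ⟫ = 0 := by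
    rw [CStarModule.inner_sub_right, h (u - v), sub_self]
  exact sub_eq_zero.mp ((CStarModule.inner_self (A := A)).mp h2)

/-- `sa t ∘ s t = id`. -/
lemma sat_st (s sa : ℝ → E →ₗ[ℂ] E)
    (hiso : ∀ t : ℝ, 0 ≤ t → ∀ x y : E, ⟪ s t x, s t y ⟫ = ⟪ x, y ⟫)
    (hadj : ∀ t : ℝ, 0 ≤ t → ∀ x y : E, ⟪ s t x, y ⟫ = ⟪ x, sa t y ⟫)
    (t : ℝ) (ht : 0 ≤ t) (x : E) : sa t (s t x) = x := by
  refine (ext_of_inner (A := A) _ _ fun y => ?_).symm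
  rw [← hadj t ht, hiso t ht]

/-- `sa (c+t) ∘ s t = sa c` for `c, t ≥ 0`. -/
lemma sact_st (s sa : ℝ → E →ₗ[ℂ] E)
    (hsg : ∀ r t : ℝ, 0 ≤ r → 0 ≤ t → s (r + t) = (s r).comp (s t))
    (hiso : ∀ t : ℝ, 0 ≤ t → ∀ x y : E, ⟪ s t x, s t y ⟫ = ⟪ x, y ⟫)
    (hadj : ∀ t : ℝ, 0 ≤ t → ∀ x y : E, ⟪ s t x, y ⟫ = ⟪ x, sa t y ⟫)
    (c t : ℝ) (hc : 0 ≤ c) (ht : 0 ≤ t) (x : E) :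
    sa (c + t) (s t x) = sa c x := by
  refine ext_of_inner (A := A) _ _ fun y => ?_
  rw [← hadj (c + t) (by linarith), ← hadj c hc, add_comm c t, hsg t c ht hc]
  exact hiso t ht (s c y) x

/-- `sa (c+t) = sa c ∘ sa t` for `c, t ≥ 0`. -/
lemma sact_comp (s sa : ℝ → E →ₗ[ℂ] E)
    (hsg : ∀ r t : ℝ, 0 ≤ r → 0 ≤ t → s (r + t) = (s r).comp (s t))
    (hadj : ∀ t : ℝ, 0 ≤ t → ∀ x y : E, ⟪ s t x, y ⟫ = ⟪ x, sa t y ⟫)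
    (c t : ℝ) (hc : 0 ≤ c) (ht : 0 ≤ t) (x : E) :
    sa (c + t) x = sa c (sa t x) := by
  refine ext_of_inner (A := A) _ _ fun y => ?_
  rw [← hadj (c + t) (by linarith), ← hadj c hc, ← hadj t ht, add_comm c t,
    hsg t c ht hc]
  rfl

/-- Commutation: `s t ∘ p_{a,b} = p_{a+t,b+t} ∘ s t`. -/
lemma st_pab (s sa : ℝ → E →ₗ[ℂ] E)
    (hsg : ∀ r t : ℝ, 0 ≤ r → 0 ≤ t → s (r + t) = (s r).comp (s t))
    (hiso : ∀ t : ℝ, 0 ≤ t → ∀ x y : E, ⟪ s t x, s t y ⟫ = ⟪ x, y ⟫)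
    (hadj : ∀ t : ℝ, 0 ≤ t → ∀ x y : E, ⟪ s t x, y ⟫ = ⟪ x, sa t y ⟫)
    (t a b : ℝ) (ht : 0 ≤ t) (ha : 0 ≤ a) (hab : a ≤ b) (x : E) :
    s t (pab s sa a b x) = pab s sa (a + t) (b + t) (s t x) := by
  have hb : 0 ≤ b := le_trans ha hab
  rw [pab, if_pos hab, pab, if_pos (by linarith : a + t ≤ b + t)]
  simp only [LinearMap.sub_apply, LinearMap.coe_comp, Function.comp_apply, map_sub]
  rw [sact_st s sa hsg hiso hadj a t ha ht,
    sact_st s sa hsg hiso hadj b t hb ht,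
    add_comm a t, add_comm b t, hsg t a ht ha, hsg t b ht hb]
  rfl

/-- Commutation: `p_{a,b} ∘ sa t = sa t ∘ p_{a+t,b+t}`. -/
lemma pab_sat (s sa : ℝ → E →ₗ[ℂ] E)
    (hsg : ∀ r t : ℝ, 0 ≤ r → 0 ≤ t → s (r + t) = (s r).comp (s t))
    (hiso : ∀ t : ℝ, 0 ≤ t → ∀ x y : E, ⟪ s t x, s t y ⟫ = ⟪ x, y ⟫)
    (hadj : ∀ t : ℝ, 0 ≤ t → ∀ x y : E, ⟪ s t x, y ⟫ = ⟪ x, sa t y ⟫)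
    (t a b : ℝ) (ht : 0 ≤ t) (ha : 0 ≤ a) (hab : a ≤ b) (y : E) :
    pab s sa a b (sa t y) = sa t (pab s sa (a + t) (b + t) y) := by
  have hb : 0 ≤ b := le_trans ha hab
  rw [pab, if_pos hab, pab, if_pos (by linarith : a + t ≤ b + t)]
  simp only [LinearMap.sub_apply, LinearMap.coe_comp, Function.comp_apply, map_sub]
  rw [← sact_comp s sa hsg hadj a t ha ht, ← sact_comp s sa hsg hadj b t hb ht,
    add_comm a t, add_comm b t, hsg t a ht ha, hsg t b ht hb]
  simp only [LinearMap.coe_comp, Function.comp_apply]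
  rw [sat_st s sa hiso hadj t ht, sat_st s sa hiso hadj t ht]

theorem shift_restricts_to_unitary_between_pab_ranges
    (s sa : ℝ → E →ₗ[ℂ] E)
    (hs0 : s 0 = LinearMap.id)
    (hsg : ∀ r t : ℝ, 0 ≤ r → 0 ≤ t → s (r + t) = (s r).comp (s t))
    (hiso : ∀ t : ℝ, 0 ≤ t → ∀ x y : E, ⟪s t x, s t y⟫ = ⟪x, y⟫)
    (hadj : ∀ t : ℝ, 0 ≤ t → ∀ x y : E, ⟪s t x, y⟫ = ⟪x, sa t y⟫)
    (t a b : ℝ) (ht : 0 ≤ t) (ha : 0 ≤ a) (hab : a < b) :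
    (s t '' Set.range (pab s sa a b) = Set.range (pab s sa (a + t) (b + t))) ∧
    (∀ x ∈ Set.range (pab s sa a b), sa t (s t x) = x) ∧
    (∀ y ∈ Set.range (pab s sa (a + t) (b + t)),
      sa t y ∈ Set.range (pab s sa a b) ∧ s t (sa t y) = y) := by
  have hab' : a ≤ b := le_of_lt hab
  have hb : 0 ≤ b := le_trans ha hab'
  have hat : 0 ≤ a + t := by linarith
  have habt : a + t ≤ b + t := by linarith
  -- key fact proved elementwise: `pab (a+t) (b+t)` absorbs `s t ∘ sa t`
  have key : ∀ z : E, pab s sa (a + t) (b + t) (s t (sa t z)) =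
      pab s sa (a + t) (b + t) z := by
    intro z
    rw [pab, if_pos habt]
    simp only [LinearMap.sub_apply, LinearMap.coe_comp, Function.comp_apply]
    rw [sact_st s sa hsg hiso hadj a t ha ht,
      sact_st s sa hsg hiso hadj b t hb ht,
      ← sact_comp s sa hsg hadj a t ha ht, ← sact_comp s sa hsg hadj b t hb ht]
  -- part 3
  have part3 : ∀ y ∈ Set.range (pab s sa (a + t) (b + t)),
      sa t y ∈ Set.range (pab s sa a b) ∧ s t (sa t y) = y := by
    rintro y ⟨z, rfl⟩
    have hmem : sa t (pab s sa (a + t) (b + t) z) = pab s sa a b (sa t z) :=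
      (pab_sat s sa hsg hiso hadj t a b ht ha hab' z).symm
    refine ⟨⟨sa t z, hmem.symm⟩, ?_⟩
    rw [hmem, st_pab s sa hsg hiso hadj t a b ht ha hab', key]
  refine ⟨?_, fun x _ => sat_st s sa hiso hadj t ht x, part3⟩
  apply Set.Subset.antisymm
  · rintro _ ⟨_, ⟨w, rfl⟩, rfl⟩
    exact ⟨s t w, (st_pab s sa hsg hiso hadj t a b ht ha hab' w).symm⟩
  · intro y hy
    obtain ⟨hmem, heq⟩ := part3 y hy
    exact ⟨sa t y, hmem, heq⟩
end
end

section
/- Let (s_t)_{t≥0} be a semigroup of adjointable isometries on a Hilbert C*-module E. For 0 ≤ a < b < ∞ and 0 ≤ t < b−a, define u_t^{a,b} := s_t p_{a, b−t} + s_{b−a−t}^* p_{b−t, b}, extended periodically with period b−a to all real t. Then each u_t^{a,b} is a unitary on E_{a,b} := p_{a,b}E and u_r^{a,b} u_t^{a,b} = u_{r+t}^{a,b} for all real r, t. -/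
open scoped RightActions
open MeasureTheory Filter Topology

noncomputable section

variable {A E : Type*} [CStarAlgebra A] [PartialOrder A] [StarOrderedRing A]
  [NormedAddCommGroup E] [NormedSpace ℂ E] [SMul A E] [CStarModule A E]

local notation "⟪" x ", " y "⟫" => (inner A x y : A)

/-- The reduced time `t - n(b-a)` for `t ∈ [n(b-a), (n+1)(b-a))`. -/
def redt (a b t : ℝ) : ℝ := t - (b - a) * (⌊t / (b - a)⌋ : ℝ)

/-- The shift-modulo-`b-a` unitary group `u_t^{a,b} = s_τ p_{a,b-τ} + s_{b-a-τ}^* p_{b-τ,b}`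
(with `τ := t - n(b-a)` the reduction of `t` modulo the period `b-a`). -/
def uab {E : Type*} [NormedAddCommGroup E] [NormedSpace ℂ E]
    (s sa : ℝ → E →ₗ[ℂ] E) (a b : ℝ) (t : ℝ) : E →ₗ[ℂ] E :=
  (s (redt a b t)).comp (pab s sa a (b - redt a b t)) +
    (sa (b - a - redt a b t)).comp (pab s sa (b - redt a b t) b)

namespace UabAux

/-! ### Arithmetic lemmas about `redt` -/

lemma redt_nonneg {a b : ℝ} (hab : a < b) (t : ℝ) : 0 ≤ redt a b t := by
  have hba : (0:ℝ) < b - a := by linarith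
  have h : ((⌊t / (b - a)⌋ : ℝ)) ≤ t / (b - a) := Int.floor_le _
  have h2 : (b - a) * ((⌊t / (b - a)⌋ : ℝ)) ≤ (b - a) * (t / (b - a)) :=
    mul_le_mul_of_nonneg_left h (le_of_lt hba)
  rw [mul_div_cancel₀ _ (ne_of_gt hba)] at h2
  simp only [redt]; linarith

lemma redt_lt {a b : ℝ} (hab : a < b) (t : ℝ) : redt a b t < b - a := by
  have hba : (0:ℝ) < b - a := by linarith
  have h : t / (b - a) < (⌊t / (b - a)⌋ : ℝ) + 1 := Int.lt_floor_add_one _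
  have h2 : (b - a) * (t / (b - a)) < (b - a) * ((⌊t / (b - a)⌋ : ℝ) + 1) :=
    mul_lt_mul_of_pos_left h hba
  rw [mul_div_cancel₀ _ (ne_of_gt hba)] at h2
  simp only [redt]; nlinarith

lemma redt_eq_self {a b t : ℝ} (hab : a < b) (h0 : 0 ≤ t) (hlt : t < b - a) :
    redt a b t = t := by
  have hba : (0:ℝ) < b - a := by linarith
  have : ⌊t / (b - a)⌋ = 0 := by
    rw [Int.floor_eq_zero_iff]
    refine ⟨by positivity, ?_⟩
    rw [div_lt_one hba]
    linarith
  simp [redt, this]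

lemma redt_add_int {a b : ℝ} (hab : a < b) (t : ℝ) (n : ℤ) :
    redt a b (t + (b - a) * n) = redt a b t := by
  have hba : (0:ℝ) < b - a := by linarith
  have h : (t + (b - a) * n) / (b - a) = t / (b - a) + n := by
    field_simp
  simp only [redt, h, Int.floor_add_intCast]
  push_cast
  ring

lemma redt_add_red {a b : ℝ} (hab : a < b) (r t : ℝ) :
    redt a b (redt a b r + redt a b t) = redt a b (r + t) := by
  have h1 : redt a b r + redt a b t
      = (r + t) + (b - a) * ((-(⌊r / (b - a)⌋ + ⌊t / (b - a)⌋) : ℤ) : ℝ) := by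
    simp only [redt]; push_cast; ring
  rw [h1, redt_add_int hab]

lemma redt_zero {a b : ℝ} (hab : a < b) : redt a b 0 = 0 :=
  redt_eq_self hab le_rfl (by linarith)

lemma redt_period {a b : ℝ} (hab : a < b) : redt a b (b - a) = 0 := by
  have h := redt_add_int hab 0 1
  simpa [redt_zero hab] using h

/-! ### Generic ring-theoretic lemmas -/

section Generic

variable {R : Type*} [Ring R] {s sa : ℝ → R}

/-- `e_t := s_t s_t^*`. -/
def eeR (s sa : ℝ → R) (t : ℝ) : R := s t * sa t

/-- The raw formula for `u_τ^{a,b}`. -/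
def vvR (s sa : ℝ → R) (a b τ : ℝ) : R :=
  s τ * (eeR s sa a - eeR s sa (b - τ)) + sa (b - a - τ) * (eeR s sa (b - τ) - eeR s sa b)

variable (hm : ∀ r t : ℝ, 0 ≤ r → 0 ≤ t → s r * s t = s (r + t))
  (hma : ∀ r t : ℝ, 0 ≤ r → 0 ≤ t → sa t * sa r = sa (r + t))
  (hu : ∀ t : ℝ, 0 ≤ t → sa t * s t = 1)

include hm in
lemma hm' {u v w : ℝ} (hu0 : 0 ≤ u) (hv0 : 0 ≤ v) (hd : u + v = w) :
    s u * s v = s w := by rw [hm u v hu0 hv0, hd]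

include hma in
lemma hma' {u v w : ℝ} (hu0 : 0 ≤ u) (hv0 : 0 ≤ v) (hd : u + v = w) :
    sa v * sa u = sa w := by rw [hma u v hu0 hv0, hd]

include hm hu in
lemma sa_s_le' {u c d : ℝ} (hu0 : 0 ≤ u) (huc : u ≤ c) (hd : c - u = d) :
    sa u * s c = s d := by
  have h1 : s u * s (c - u) = s c := by
    rw [hm u (c - u) hu0 (by linarith)]; exact congrArg s (by ring)
  rw [← hd, ← h1, ← mul_assoc, hu u hu0, one_mul]

include hma hu in
lemma sa_s_ge' {u c d : ℝ} (hc0 : 0 ≤ c) (hcu : c ≤ u) (hd : u - c = d) :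
    sa u * s c = sa d := by
  have h1 : sa (u - c) * sa c = sa u := by
    rw [hma c (u - c) hc0 (by linarith)]; exact congrArg sa (by ring)
  rw [← hd, ← h1, mul_assoc, hu c hc0, mul_one]

include hm hma hu in
lemma e_s_le' {c u d : ℝ} (hu0 : 0 ≤ u) (huc : u ≤ c) (hd : c - u = d) :
    eeR s sa c * s u = s u * eeR s sa d := by
  subst hd
  simp only [eeR]
  rw [mul_assoc, sa_s_ge' hma hu hu0 huc rfl, ← mul_assoc (s u),
    ← hm' hm hu0 (by linarith : (0:ℝ) ≤ c - u) (show u + (c - u) = c by ring),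
    mul_assoc]

include hm hu in
lemma e_s_ge' {c u : ℝ} (hc0 : 0 ≤ c) (hcu : c ≤ u) :
    eeR s sa c * s u = s u := by
  rw [eeR, mul_assoc, sa_s_le' hm hu hc0 hcu rfl,
    hm' hm hc0 (by linarith : (0:ℝ) ≤ u - c) (show c + (u - c) = u by ring)]

include hm hu in
lemma sa_e_le' {u c d : ℝ} (hu0 : 0 ≤ u) (huc : u ≤ c) (hd : c - u = d) :
    sa u * eeR s sa c = s d * sa c := by
  rw [eeR, ← mul_assoc, sa_s_le' hm hu hu0 huc hd]

include hma hu in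
lemma sa_e_ge' {u c : ℝ} (hc0 : 0 ≤ c) (hcu : c ≤ u) :
    sa u * eeR s sa c = sa u := by
  rw [eeR, ← mul_assoc, sa_s_ge' hma hu hc0 hcu rfl,
    hma' hma hc0 (by linarith : (0:ℝ) ≤ u - c) (show c + (u - c) = u by ring)]

include hma in
lemma e_sa' {c u w : ℝ} (hc0 : 0 ≤ c) (hu0 : 0 ≤ u) (hd : c + u = w) :
    eeR s sa c * sa u = s c * sa w := by
  rw [eeR, mul_assoc, hma' hma hu0 hc0 (by linarith)]

include hm in
lemma s_e' {u c w : ℝ} (hu0 : 0 ≤ u) (hc0 : 0 ≤ c) (hd : u + c = w) :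
    s u * eeR s sa c = s w * sa c := by
  rw [eeR, ← mul_assoc, hm' hm hu0 hc0 hd]

include hm hma hu in
lemma e_e_left' {r t : ℝ} (hr : 0 ≤ r) (hrt : r ≤ t) :
    eeR s sa r * eeR s sa t = eeR s sa t := by
  simp only [eeR]
  rw [mul_assoc, ← mul_assoc (sa r) (s t), sa_s_le' hm hu hr hrt rfl, ← mul_assoc,
    hm' hm hr (by linarith : (0:ℝ) ≤ t - r) (show r + (t - r) = t by ring)]

include hm hma hu in
lemma e_e_right' {r t : ℝ} (hr : 0 ≤ r) (hrt : r ≤ t) :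
    eeR s sa t * eeR s sa r = eeR s sa t := by
  have ht : 0 ≤ t := le_trans hr hrt
  simp only [eeR]
  rw [mul_assoc, ← mul_assoc (sa t) (s r), sa_s_ge' hma hu hr hrt rfl,
    hma' hma hr (by linarith : (0:ℝ) ≤ t - r) (show r + (t - r) = t by ring)]

include hm hma hu in
lemma e_e_max {r t : ℝ} (hr : 0 ≤ r) (ht : 0 ≤ t) :
    eeR s sa r * eeR s sa t = eeR s sa (max r t) := by
  rcases le_total r t with h | h
  · rw [e_e_left' hm hma hu hr h, max_eq_right h]
  · rw [e_e_right' hm hma hu ht h, max_eq_left h]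

include hm hma hu in
/-- `e_c · (s_τ (e_a - e_{b-τ}))`. -/
lemma esQ {a b c τ : ℝ} (ha : 0 ≤ a) (haτ : a ≤ b - τ) (hτ0 : 0 ≤ τ)
    (hc0 : 0 ≤ c) (hcb : c ≤ b) :
    eeR s sa c * (s τ * (eeR s sa a - eeR s sa (b - τ)))
      = s τ * (eeR s sa (max a (c - τ)) - eeR s sa (b - τ)) := by
  rcases le_total c τ with h | h
  · rw [← mul_assoc, e_s_ge' hm hu hc0 h, max_eq_left (by linarith)]
  · rw [← mul_assoc, e_s_le' hm hma hu hτ0 h rfl, mul_assoc]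
    congr 1
    rw [mul_sub, e_e_max hm hma hu (by linarith) ha,
      e_e_left' hm hma hu (by linarith) (by linarith), max_comm]

include hm hma in
/-- `e_c · (s_{b-a-τ}^* (e_{b-τ} - e_b)) = s_c (s_{c + b-a-τ}^* (e_{b-τ} - e_b))`. -/
lemma esaR {a b c τ u : ℝ} (hc0 : 0 ≤ c) (hστ : 0 ≤ b - a - τ)
    (hd : c + (b - a - τ) = u) :
    eeR s sa c * (sa (b - a - τ) * (eeR s sa (b - τ) - eeR s sa b))
      = s c * (sa u * (eeR s sa (b - τ) - eeR s sa b)) := by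
  rw [← mul_assoc, e_sa' hma hc0 hστ hd, mul_assoc]

include hm hma hu in
lemma saR_le {b τ u d : ℝ} (hbτ : 0 ≤ b - τ) (h1 : b - τ ≤ u) (h2 : u ≤ b)
    (hd : b - u = d) :
    sa u * (eeR s sa (b - τ) - eeR s sa b) = sa u - s d * sa b := by
  have hu0 : 0 ≤ u := le_trans hbτ h1
  rw [mul_sub, sa_e_ge' hma hu hbτ h1, sa_e_le' hm hu hu0 h2 hd]

include hm hma hu in
lemma saR_ge {b τ u : ℝ} (hbτ : 0 ≤ b - τ) (h1 : b - τ ≤ u) (hb : 0 ≤ b) (h2 : b ≤ u) :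
    sa u * (eeR s sa (b - τ) - eeR s sa b) = 0 := by
  rw [mul_sub, sa_e_ge' hma hu hbτ h1, sa_e_ge' hma hu hb h2, sub_self]

include hm hma hu in
/-- The key multiplication rule for the raw unitaries. -/
lemma keyR {a b ρ τ : ℝ} (ha : 0 ≤ a) (hab : a < b)
    (hρ0 : 0 ≤ ρ) (hρ : ρ < b - a) (hτ0 : 0 ≤ τ) (hτ : τ < b - a) :
    vvR s sa a b ρ * vvR s sa a b τ = vvR s sa a b (redt a b (ρ + τ)) := by
  have hb0 : (0:ℝ) ≤ b := by linarith
  have hbτ : (0:ℝ) ≤ b - τ := by linarith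
  have hbρ : (0:ℝ) ≤ b - ρ := by linarith
  have haτ : a ≤ b - τ := by linarith
  have haρ : a ≤ b - ρ := by linarith
  -- common subproducts
  have hQa : eeR s sa a * (s τ * (eeR s sa a - eeR s sa (b - τ)))
      = s τ * (eeR s sa a - eeR s sa (b - τ)) := by
    rw [esQ hm hma hu ha haτ hτ0 ha (by linarith), max_eq_left (by linarith)]
  have hQb : eeR s sa b * (s τ * (eeR s sa a - eeR s sa (b - τ))) = 0 := by
    rw [esQ hm hma hu ha haτ hτ0 hb0 le_rfl, max_eq_right (by linarith), sub_self,
      mul_zero]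
  have hRa : eeR s sa a * (sa (b - a - τ) * (eeR s sa (b - τ) - eeR s sa b))
      = s a * (sa (b - τ) - s τ * sa b) := by
    rw [esaR hm hma ha (by linarith) (by ring : a + (b - a - τ) = b - τ),
      saR_le hm hma hu hbτ le_rfl (by linarith) (by ring : b - (b - τ) = τ)]
  have hRb : eeR s sa b * (sa (b - a - τ) * (eeR s sa (b - τ) - eeR s sa b)) = 0 := by
    rw [esaR hm hma hb0 (by linarith) rfl,
      saR_ge hm hma hu hbτ (by linarith) hb0 (by linarith), mul_zero]
  rcases lt_or_ge (ρ + τ) (b - a) with hc | hc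
  · -- no wrap-around
    rw [redt_eq_self hab (by linarith) hc]
    have hQbρ : eeR s sa (b - ρ) * (s τ * (eeR s sa a - eeR s sa (b - τ)))
        = s τ * (eeR s sa (b - ρ - τ) - eeR s sa (b - τ)) := by
      rw [esQ hm hma hu ha haτ hτ0 hbρ (by linarith), max_eq_right (by linarith)]
    have hRbρ : eeR s sa (b - ρ) * (sa (b - a - τ) * (eeR s sa (b - τ) - eeR s sa b))
        = 0 := by
      rw [esaR hm hma hbρ (by linarith) rfl,
        saR_ge hm hma hu hbτ (by linarith) hb0 (by linarith), mul_zero]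
    have h11 : s ρ * (eeR s sa a - eeR s sa (b - ρ))
        * (s τ * (eeR s sa a - eeR s sa (b - τ)))
        = s (ρ + τ) * (eeR s sa a - eeR s sa (b - ρ - τ)) := by
      rw [mul_assoc, sub_mul, hQa, hQbρ, ← mul_sub, sub_sub_sub_cancel_right,
        ← mul_assoc, hm' hm hρ0 hτ0 rfl]
    have h12 : s ρ * (eeR s sa a - eeR s sa (b - ρ))
        * (sa (b - a - τ) * (eeR s sa (b - τ) - eeR s sa b))
        = s (a + ρ) * sa (b - τ) - s (a + ρ + τ) * sa b := by
      rw [mul_assoc, sub_mul, hRa, hRbρ, sub_zero, ← mul_assoc,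
        hm' hm hρ0 ha (by ring : ρ + a = a + ρ), mul_sub, ← mul_assoc,
        hm' hm (by linarith) hτ0 rfl]
    have h21 : sa (b - a - ρ) * (eeR s sa (b - ρ) - eeR s sa b)
        * (s τ * (eeR s sa a - eeR s sa (b - τ)))
        = sa (b - a - (ρ + τ)) * (eeR s sa (b - ρ - τ) - eeR s sa (b - τ)) := by
      rw [mul_assoc, sub_mul, hQbρ, hQb, sub_zero, ← mul_assoc,
        sa_s_ge' hma hu hτ0 (by linarith) (by ring : b - a - ρ - τ = b - a - (ρ + τ))]
    have h22 : sa (b - a - ρ) * (eeR s sa (b - ρ) - eeR s sa b)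
        * (sa (b - a - τ) * (eeR s sa (b - τ) - eeR s sa b)) = 0 := by
      rw [mul_assoc, sub_mul, hRbρ, hRb, sub_zero, mul_zero]
    have hx : sa (b - a - (ρ + τ)) * (eeR s sa (b - ρ - τ) - eeR s sa b)
        = sa (b - a - (ρ + τ)) * (eeR s sa (b - ρ - τ) - eeR s sa (b - τ))
          + (s (a + ρ) * sa (b - τ) - s (a + ρ + τ) * sa b) := by
      have t1 : sa (b - a - (ρ + τ)) * eeR s sa (b - τ) = s (a + ρ) * sa (b - τ) :=
        sa_e_le' hm hu (by linarith) (by linarith) (by ring)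
      have t2 : sa (b - a - (ρ + τ)) * eeR s sa b = s (a + ρ + τ) * sa b :=
        sa_e_le' hm hu (by linarith) (by linarith) (by ring)
      rw [mul_sub, mul_sub, t1, t2]; abel
    simp only [vvR]
    rw [add_mul, mul_add, mul_add, h11, h12, h21, h22,
      show b - (ρ + τ) = b - ρ - τ by ring, hx]
    abel
  · -- wrap-around
    have hred : redt a b (ρ + τ) = ρ + τ - (b - a) := by
      have h := redt_add_int hab (ρ + τ - (b - a)) 1
      rw [show ρ + τ - (b - a) + (b - a) * ((1:ℤ):ℝ) = ρ + τ by push_cast; ring] at h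
      rw [h, redt_eq_self hab (by linarith) (by linarith)]
    rw [hred]
    have hQbρ : eeR s sa (b - ρ) * (s τ * (eeR s sa a - eeR s sa (b - τ)))
        = s τ * (eeR s sa a - eeR s sa (b - τ)) := by
      rw [esQ hm hma hu ha haτ hτ0 hbρ (by linarith), max_eq_left (by linarith)]
    have hRbρ : eeR s sa (b - ρ) * (sa (b - a - τ) * (eeR s sa (b - τ) - eeR s sa b))
        = s (b - ρ) * (sa (2*b - a - ρ - τ) - s (ρ + τ - (b - a)) * sa b) := by
      rw [esaR hm hma hbρ (by linarith) (by ring : b - ρ + (b - a - τ) = 2*b - a - ρ - τ),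
        saR_le hm hma hu hbτ (by linarith) (by linarith)
          (by ring : b - (2*b - a - ρ - τ) = ρ + τ - (b - a))]
    have h11 : s ρ * (eeR s sa a - eeR s sa (b - ρ))
        * (s τ * (eeR s sa a - eeR s sa (b - τ))) = 0 := by
      rw [mul_assoc, sub_mul, hQa, hQbρ, sub_self, mul_zero]
    have h12 : s ρ * (eeR s sa a - eeR s sa (b - ρ))
        * (sa (b - a - τ) * (eeR s sa (b - τ) - eeR s sa b))
        = s (a + ρ) * sa (b - τ) - s b * sa (2*b - a - ρ - τ) := by
      have k1 : s ρ * (s a * (sa (b - τ) - s τ * sa b))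
          = s (a + ρ) * sa (b - τ) - s (a + ρ + τ) * sa b := by
        rw [← mul_assoc, hm' hm hρ0 ha (show ρ + a = a + ρ by ring), mul_sub,
          ← mul_assoc, hm' hm (by linarith : (0:ℝ) ≤ a + ρ) hτ0 rfl]
      have k2 : s ρ * (s (b - ρ) * (sa (2*b - a - ρ - τ) - s (ρ + τ - (b - a)) * sa b))
          = s b * sa (2*b - a - ρ - τ) - s (a + ρ + τ) * sa b := by
        rw [← mul_assoc, hm' hm hρ0 (by linarith : (0:ℝ) ≤ b - ρ)
            (show ρ + (b - ρ) = b by ring), mul_sub, ← mul_assoc,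
          hm' hm hb0 (by linarith) (show b + (ρ + τ - (b - a)) = a + ρ + τ by ring)]
      rw [mul_assoc, sub_mul, hRa, hRbρ, mul_sub, k1, k2]
      abel
    have h21 : sa (b - a - ρ) * (eeR s sa (b - ρ) - eeR s sa b)
        * (s τ * (eeR s sa a - eeR s sa (b - τ)))
        = s (ρ + τ - (b - a)) * (eeR s sa a - eeR s sa (b - τ)) := by
      rw [mul_assoc, sub_mul, hQbρ, hQb, sub_zero, ← mul_assoc,
        sa_s_le' hm hu (by linarith) (by linarith)
          (by ring : τ - (b - a - ρ) = ρ + τ - (b - a))]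
    have h22 : sa (b - a - ρ) * (eeR s sa (b - ρ) - eeR s sa b)
        * (sa (b - a - τ) * (eeR s sa (b - τ) - eeR s sa b))
        = s a * sa (2*b - a - ρ - τ) - s (2*a + ρ + τ - b) * sa b := by
      rw [mul_assoc, sub_mul, hRbρ, hRb, sub_zero, ← mul_assoc,
        sa_s_le' hm hu (by linarith) (by linarith) (by ring : b - ρ - (b - a - ρ) = a),
        mul_sub, ← mul_assoc, hm' hm ha (by linarith)
          (by ring : a + (ρ + τ - (b - a)) = 2*a + ρ + τ - b)]
    have hx1 : s (ρ + τ - (b - a)) * (eeR s sa a - eeR s sa (2*b - a - ρ - τ))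
        = s (ρ + τ - (b - a)) * (eeR s sa a - eeR s sa (b - τ))
          + (s (a + ρ) * sa (b - τ) - s b * sa (2*b - a - ρ - τ)) := by
      have t1 : s (ρ + τ - (b - a)) * eeR s sa (b - τ) = s (a + ρ) * sa (b - τ) :=
        s_e' hm (by linarith) hbτ (by ring)
      have t2 : s (ρ + τ - (b - a)) * eeR s sa (2*b - a - ρ - τ) = s b * sa (2*b - a - ρ - τ) :=
        s_e' hm (by linarith) (by linarith) (by ring)
      rw [mul_sub, mul_sub, t1, t2]; abel
    have hx2 : sa (b - a - (ρ + τ - (b - a))) * (eeR s sa (2*b - a - ρ - τ) - eeR s sa b)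
        = s a * sa (2*b - a - ρ - τ) - s (2*a + ρ + τ - b) * sa b := by
      have t1 : sa (b - a - (ρ + τ - (b - a))) * eeR s sa (2*b - a - ρ - τ)
          = s a * sa (2*b - a - ρ - τ) :=
        sa_e_le' hm hu (by linarith) (by linarith) (by ring)
      have t2 : sa (b - a - (ρ + τ - (b - a))) * eeR s sa b = s (2*a + ρ + τ - b) * sa b :=
        sa_e_le' hm hu (by linarith) (by linarith) (by ring)
      rw [mul_sub, t1, t2]
    simp only [vvR]
    rw [add_mul, mul_add, mul_add, h11, h12, h21, h22,
      show b - (ρ + τ - (b - a)) = 2*b - a - ρ - τ by ring, hx1, hx2]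
    abel

include hm hma hu in
lemma PP {a b : ℝ} (ha : 0 ≤ a) (hab : a ≤ b) :
    (eeR s sa a - eeR s sa b) * (eeR s sa a - eeR s sa b) = eeR s sa a - eeR s sa b := by
  have hb : 0 ≤ b := le_trans ha hab
  rw [sub_mul, mul_sub, mul_sub, e_e_left' hm hma hu ha le_rfl,
    e_e_left' hm hma hu ha hab, e_e_right' hm hma hu ha hab,
    e_e_left' hm hma hu hb le_rfl]
  abel

lemma vv_zero {a b : ℝ} (hs1 : s 0 = 1) :
    vvR s sa a b 0 = eeR s sa a - eeR s sa b := by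
  simp only [vvR, sub_zero, hs1, one_mul, sub_self, mul_zero, add_zero]

lemma vv_ba {a b : ℝ} (hsa1 : sa 0 = 1) :
    vvR s sa a b (b - a) = eeR s sa a - eeR s sa b := by
  simp only [vvR, show b - (b - a) = a by ring, show b - a - (b - a) = (0:ℝ) by ring,
    hsa1, one_mul, sub_self, mul_zero, zero_add]

include hm hma hu in
lemma vv_inv {a b τ : ℝ} (hs1 : s 0 = 1) (hsa1 : sa 0 = 1) (ha : 0 ≤ a) (hab : a < b)
    (hτ0 : 0 ≤ τ) (hτ : τ < b - a) :
    vvR s sa a b (b - a - τ) * vvR s sa a b τ = eeR s sa a - eeR s sa b := by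
  rcases eq_or_lt_of_le hτ0 with h0 | h0
  · rw [← h0, sub_zero, vv_ba hsa1, vv_zero hs1, PP hm hma hu ha (le_of_lt hab)]
  · have h := keyR hm hma hu ha hab (by linarith : (0:ℝ) ≤ b - a - τ)
      (by linarith) hτ0 hτ
    rw [show b - a - τ + τ = b - a by ring, redt_period hab, vv_zero hs1] at h
    exact h

include hm hma hu in
lemma vv_adj_op {a b τ : ℝ} (ha : 0 ≤ a) (hab : a ≤ b) (hτ0 : 0 ≤ τ) (hτ : τ ≤ b - a) :
    (eeR s sa a - eeR s sa (b - τ)) * sa τ + (eeR s sa (b - τ) - eeR s sa b) * s (b - a - τ)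
      = vvR s sa a b (b - a - τ) := by
  have hbτ : (0:ℝ) ≤ b - τ := by linarith
  rw [sub_mul, e_sa' hma ha hτ0 rfl, e_sa' hma hbτ hτ0 (by ring : b - τ + τ = b),
    sub_mul, e_s_le' hm hma hu (by linarith) (by linarith) (by ring : b - τ - (b - a - τ) = a),
    e_s_le' hm hma hu (by linarith) (by linarith) (by ring : b - (b - a - τ) = a + τ)]
  simp only [vvR, show b - (b - a - τ) = a + τ by ring,
    show b - a - (b - a - τ) = τ by ring]
  rw [mul_sub (sa τ), sa_e_le' hm hu hτ0 (by linarith) (by ring : a + τ - τ = a),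
    sa_e_le' hm hu hτ0 (by linarith) rfl, mul_sub]
  abel

end Generic

end UabAux

end

noncomputable section Main

variable {A E : Type*} [CStarAlgebra A] [PartialOrder A] [StarOrderedRing A]
  [NormedAddCommGroup E] [NormedSpace ℂ E] [SMul A E] [CStarModule A E]

local notation "⟪" x ", " y "⟫" => (inner A x y : A)

namespace UabAux

lemma ext_inner {x y : E} (h : ∀ z : E, ⟪z, x⟫ = ⟪z, y⟫) : x = y := by
  rw [← sub_eq_zero, ← CStarModule.inner_self (A := A) (x := x - y),
    CStarModule.inner_sub_right, h (x - y), sub_eq_zero]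

lemma pab_eq {s sa : ℝ → E →ₗ[ℂ] E} {c d : ℝ} (h : c ≤ d) :
    pab s sa c d = eeR s sa c - eeR s sa d := by
  rw [pab, if_pos h]; rfl

lemma uab_eq {s sa : ℝ → E →ₗ[ℂ] E} {a b : ℝ} (hab : a < b) (t : ℝ) :
    uab s sa a b t = vvR s sa a b (redt a b t) := by
  have h0 := redt_nonneg hab t
  have h1 := redt_lt hab t
  rw [uab, pab_eq (by linarith : a ≤ b - redt a b t),
    pab_eq (by linarith : b - redt a b t ≤ b)]
  rfl

end UabAux

open UabAux in
theorem uab_unitary_group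
    (s sa : ℝ → E →ₗ[ℂ] E)
    (hs0 : s 0 = LinearMap.id)
    (hsg : ∀ r t : ℝ, 0 ≤ r → 0 ≤ t → s (r + t) = (s r).comp (s t))
    (hiso : ∀ t : ℝ, 0 ≤ t → ∀ x y : E, ⟪s t x, s t y⟫ = ⟪x, y⟫)
    (hadj : ∀ t : ℝ, 0 ≤ t → ∀ x y : E, ⟪s t x, y⟫ = ⟪x, sa t y⟫)
    (a b : ℝ) (ha : 0 ≤ a) (hab : a < b) :
    (∀ t : ℝ, ∀ x ∈ Set.range (pab s sa a b), uab s sa a b t x ∈ Set.range (pab s sa a b)) ∧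
    (∀ t : ℝ, ∀ x ∈ Set.range (pab s sa a b), ∀ y ∈ Set.range (pab s sa a b),
      ⟪uab s sa a b t x, uab s sa a b t y⟫ = ⟪x, y⟫) ∧
    (∀ t : ℝ, ∀ y ∈ Set.range (pab s sa a b),
      ∃ x ∈ Set.range (pab s sa a b), uab s sa a b t x = y) ∧
    (∀ r t : ℝ, ∀ x ∈ Set.range (pab s sa a b),
      uab s sa a b r (uab s sa a b t x) = uab s sa a b (r + t) x) := by
  -- basic consequences of the hypotheses
  have hs1 : s 0 = 1 := hs0
  have hm : ∀ r t : ℝ, 0 ≤ r → 0 ≤ t → s r * s t = s (r + t) :=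
    fun r t hr ht => (hsg r t hr ht).symm
  have hu : ∀ t : ℝ, 0 ≤ t → sa t * s t = 1 := by
    intro t ht
    ext x
    refine ext_inner (A := A) fun z => ?_
    rw [Module.End.mul_apply, ← hadj t ht z (s t x), hiso t ht z x, Module.End.one_apply]
  have hsa1 : sa 0 = 1 := by
    ext x
    refine ext_inner (A := A) fun z => ?_
    rw [← hadj 0 le_rfl z x, hs1, Module.End.one_apply, Module.End.one_apply]
  have hma : ∀ r t : ℝ, 0 ≤ r → 0 ≤ t → sa t * sa r = sa (r + t) := by
    intro r t hr ht
    ext x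
    refine ext_inner (A := A) fun z => ?_
    have h1 : s r (s t z) = s (r + t) z := by rw [hsg r t hr ht]; rfl
    rw [Module.End.mul_apply, ← hadj t ht z _, ← hadj r hr _ x, h1,
      hadj (r + t) (by linarith) z x]
  have hadj' : ∀ t : ℝ, 0 ≤ t → ∀ x y : E, ⟪sa t x, y⟫ = ⟪x, s t y⟫ := by
    intro t ht x y
    rw [← CStarModule.star_inner, ← hadj t ht y x, CStarModule.star_inner]
  -- inner-product facts
  have he_sym : ∀ c : ℝ, 0 ≤ c → ∀ x y : E, ⟪(eeR s sa c) x, y⟫ = ⟪x, (eeR s sa c) y⟫ := by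
    intro c hc x y
    show ⟪(s c * sa c) x, y⟫ = ⟪x, (s c * sa c) y⟫
    rw [Module.End.mul_apply, Module.End.mul_apply, hadj c hc, ← hadj' c hc]
  have hq_sym : ∀ c d : ℝ, 0 ≤ c → 0 ≤ d → ∀ x y : E,
      ⟪(eeR s sa c - eeR s sa d) x, y⟫ = ⟪x, (eeR s sa c - eeR s sa d) y⟫ := by
    intro c d hc hd x y
    rw [LinearMap.sub_apply, LinearMap.sub_apply, CStarModule.inner_sub_left,
      CStarModule.inner_sub_right, he_sym c hc, he_sym d hd]
  -- adjoint of vvR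
  have adj_vv : ∀ τ : ℝ, 0 ≤ τ → τ ≤ b - a → ∀ x y : E,
      ⟪(vvR s sa a b τ) x, y⟫ = ⟪x, (vvR s sa a b (b - a - τ)) y⟫ := by
    intro τ hτ0 hτ x y
    have hbτ : (0:ℝ) ≤ b - τ := by linarith
    have h1 : (vvR s sa a b τ) x
        = s τ ((eeR s sa a - eeR s sa (b - τ)) x)
          + sa (b - a - τ) ((eeR s sa (b - τ) - eeR s sa b) x) := by
      simp [vvR, LinearMap.add_apply, Module.End.mul_apply]
    rw [h1, CStarModule.inner_add_left, hadj τ hτ0, hadj' (b - a - τ) (by linarith),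
      hq_sym a (b - τ) ha hbτ, hq_sym (b - τ) b hbτ (by linarith),
      ← Module.End.mul_apply, ← Module.End.mul_apply, ← CStarModule.inner_add_right,
      ← LinearMap.add_apply, vv_adj_op hm hma hu ha (le_of_lt hab) hτ0 hτ]
  -- group law for uab
  have umul : ∀ r t : ℝ, uab s sa a b r * uab s sa a b t = uab s sa a b (r + t) := by
    intro r t
    rw [uab_eq hab r, uab_eq hab t, uab_eq hab (r + t),
      keyR hm hma hu ha hab (redt_nonneg hab r) (redt_lt hab r)
        (redt_nonneg hab t) (redt_lt hab t), redt_add_red hab]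
  have uzero : uab s sa a b 0 = pab s sa a b := by
    rw [uab_eq hab 0, redt_zero hab, vv_zero hs1, pab_eq (le_of_lt hab)]
  -- P fixes its range
  have hPfix : ∀ y ∈ Set.range (pab s sa a b), pab s sa a b y = y := by
    rintro y ⟨z, rfl⟩
    show (pab s sa a b * pab s sa a b) z = pab s sa a b z
    rw [pab_eq (le_of_lt hab), PP hm hma hu ha (le_of_lt hab)]
  have part1 : ∀ t : ℝ, ∀ x : E, uab s sa a b t x ∈ Set.range (pab s sa a b) := by
    intro t x
    refine ⟨uab s sa a b t x, ?_⟩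
    show (pab s sa a b * uab s sa a b t) x = uab s sa a b t x
    rw [← uzero, umul 0 t, zero_add]
  refine ⟨fun t x _ => part1 t x, ?_, ?_, ?_⟩
  · -- inner products preserved
    intro t x hx y hy
    rw [uab_eq hab t,
      adj_vv (redt a b t) (redt_nonneg hab t) (le_of_lt (redt_lt hab t)),
      ← Module.End.mul_apply,
      vv_inv hm hma hu hs1 hsa1 ha hab (redt_nonneg hab t) (redt_lt hab t),
      ← pab_eq (le_of_lt hab), hPfix y hy]
  · -- surjectivity on the range
    intro t y hy
    refine ⟨uab s sa a b (-t) y, part1 (-t) y, ?_⟩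
    rw [← Module.End.mul_apply, umul t (-t), add_neg_cancel, uzero, hPfix y hy]
  · -- one-parameter group
    intro r t x _
    rw [← Module.End.mul_apply, umul r t]

end Main
end

section
/- Let (s_t)_{t≥0} be a strongly continuous semigroup of adjointable isometries on a Hilbert C*-module E. Then the adjoint family t ↦ s_t^* is also strongly continuous; in particular ‖s_t^* x − x‖ ≤ ‖x − s_t x‖ for all x ∈ E and t ≥ 0. -/
open scoped RightActions
open MeasureTheory Filter Topology

noncomputable section

variable {A E : Type*} [CStarAlgebra A] [PartialOrder A] [StarOrderedRing A]
  [NormedAddCommGroup E] [NormedSpace ℂ E] [SMul Aᵐᵒᵖ E] [CStarModuleOld A E]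

local notation "⟪" x ", " y "⟫" => (inner A x y : A)

variable (A) in
theorem CStarModuleOld.norm_sq_eq {x : E} : ‖x‖ ^ 2 = ‖⟪x, x⟫‖ := by
  rw [CStarModuleOld.norm_eq_sqrt_norm_inner_self (A := A) x, Real.sq_sqrt (norm_nonneg _)]

variable (A) in
theorem CStarModuleOld.inner_sub_right {x y z : E} : ⟪x, y - z⟫ = ⟪x, y⟫ - ⟪x, z⟫ := by
  have h := CStarModuleOld.inner_add_right (A := A) (x := x) (y := y - z) (z := z)
  rw [sub_add_cancel] at h
  rw [h, add_sub_cancel_right]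

variable (A) in
theorem CStarModuleOld.inner_zero_right {x : E} : ⟪x, 0⟫ = 0 := by
  calc ⟪x, 0⟫ = ⟪x, 0⟫ + ⟪x, 0⟫ - ⟪x, 0⟫ := by abel
    _ = ⟪x, 0 + 0⟫ - ⟪x, 0⟫ := by rw [CStarModuleOld.inner_add_right]
    _ = 0 := by rw [add_zero, sub_self]

variable (A) in
theorem CStarModuleOld.norm_inner_le {x y : E} : ‖⟪x, y⟫‖ ≤ ‖x‖ * ‖y‖ := by
  have hR : ∀ (r : ℝ) (u v : E), ⟪u, r • v⟫ = r • ⟪u, v⟫ := by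
    intro r u v
    rw [← Complex.coe_smul r v, CStarModuleOld.inner_smul_right_complex, Complex.coe_smul]
  have hstarR : ∀ (r : ℝ) (b : A), star (r • b) = r • star b := by
    intro r b
    rw [← Complex.coe_smul, star_smul, Complex.star_def, Complex.conj_ofReal, Complex.coe_smul]
  have hL : ∀ (r : ℝ) (u v : E), ⟪r • u, v⟫ = r • ⟪u, v⟫ := by
    intro r u v
    rw [← CStarModuleOld.star_inner v, hR, hstarR, CStarModuleOld.star_inner]
  have hopL : ∀ (a : A) (u v : E), ⟪u <• a, v⟫ = star a * ⟪u, v⟫ := by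
    intro a u v
    rw [← CStarModuleOld.star_inner v, CStarModuleOld.inner_op_smul_right, star_mul,
      CStarModuleOld.star_inner]
  have hsubL : ∀ u v w : E, ⟪u - v, w⟫ = ⟪u, w⟫ - ⟪v, w⟫ := by
    intro u v w
    rw [← CStarModuleOld.star_inner w, CStarModuleOld.inner_sub_right A, star_sub,
      CStarModuleOld.star_inner, CStarModuleOld.star_inner]
  rcases eq_or_ne x 0 with hx | hx
  · subst hx
    rw [← CStarModuleOld.star_inner y, CStarModuleOld.inner_zero_right A, star_zero, norm_zero,
      norm_zero, zero_mul]
  have hxpos : 0 < ‖x‖ := norm_pos_iff.mpr hx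
  set r : ℝ := ‖x‖ ^ 2 with hr
  have hrpos : 0 < r := by positivity
  set a : A := ⟪x, y⟫ with ha
  have hsa : star a = ⟪y, x⟫ := CStarModuleOld.star_inner x y
  have h0 : (0:A) ≤ ⟪x <• a - r • y, x <• a - r • y⟫ := CStarModuleOld.inner_self_nonneg
  have hexp : ⟪x <• a - r • y, x <• a - r • y⟫
      = star a * ⟪x, x⟫ * a - r • (star a * a) - r • (star a * a) + r • (r • ⟪y, y⟫) := by
    simp only [CStarModuleOld.inner_sub_right A, hsubL, hopL, CStarModuleOld.inner_op_smul_right,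
      hR, hL, ← hsa, mul_assoc, mul_smul_comm, ← ha]
    abel
  have h3 : star a * ⟪x, x⟫ * a ≤ r • (star a * a) := by
    rw [hr, CStarModuleOld.norm_sq_eq A]
    exact CStarAlgebra.star_left_conjugate_le_norm_smul (hb := CStarModuleOld.star_inner x x)
  have h2 : (0:A) ≤ r • (r • ⟪y, y⟫ - star a * a) := by
    calc (0:A) ≤ _ := h0
      _ = _ := hexp
      _ ≤ r • (star a * a) - r • (star a * a) - r • (star a * a) + r • (r • ⟪y, y⟫) := by
        gcongr
      _ = r • (r • ⟪y, y⟫ - star a * a) := by rw [smul_sub]; abel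
  have h4 : (0:A) ≤ r • ⟪y, y⟫ - star a * a := by
    have := smul_nonneg (inv_nonneg.mpr hrpos.le) h2
    rwa [smul_smul, inv_mul_cancel₀ hrpos.ne', one_smul] at this
  have hP : star a * a ≤ r • ⟪y, y⟫ := sub_nonneg.mp h4
  have h5 : ‖a‖ ^ 2 ≤ (‖x‖ * ‖y‖) ^ 2 := by
    calc ‖a‖ ^ 2 = ‖star a * a‖ := by rw [CStarRing.norm_star_mul_self, pow_two]
      _ ≤ ‖r • ⟪y, y⟫‖ := CStarAlgebra.norm_le_norm_of_nonneg_of_le (star_mul_self_nonneg a) hP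
      _ = r * ‖⟪y, y⟫‖ := by rw [norm_smul, Real.norm_of_nonneg hrpos.le]
      _ = (‖x‖ * ‖y‖) ^ 2 := by rw [← CStarModuleOld.norm_sq_eq A, hr, mul_pow]
  exact (pow_le_pow_iff_left₀ (norm_nonneg _) (by positivity) two_ne_zero).mp h5

theorem adjoint_semigroup_strongly_continuous
    (s sa : ℝ → E →ₗ[ℂ] E)
    (hs0 : s 0 = LinearMap.id)
    (hsg : ∀ r t : ℝ, 0 ≤ r → 0 ≤ t → s (r + t) = (s r).comp (s t))
    (hiso : ∀ t : ℝ, 0 ≤ t → ∀ x y : E, ⟪s t x, s t y⟫ = ⟪x, y⟫)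
    (hadj : ∀ t : ℝ, 0 ≤ t → ∀ x y : E, ⟪s t x, y⟫ = ⟪x, sa t y⟫)
    (hsc : ∀ x : E, ContinuousOn (fun t : ℝ => s t x) (Set.Ici 0)) :
    (∀ x : E, ∀ t : ℝ, 0 ≤ t → ‖sa t x - x‖ ≤ ‖x - s t x‖) ∧
    (∀ x : E, ContinuousOn (fun t : ℝ => sa t x) (Set.Ici 0)) := by
  -- s t preserves norms
  have hnorm_s : ∀ t : ℝ, 0 ≤ t → ∀ z : E, ‖s t z‖ = ‖z‖ := by
    intro t ht z
    have h1 : ‖s t z‖ ^ 2 = ‖z‖ ^ 2 := by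
      rw [CStarModuleOld.norm_sq_eq A, CStarModuleOld.norm_sq_eq A, hiso t ht]
    have h2 := (sq_eq_sq_iff_abs_eq_abs _ _).mp h1
    rwa [abs_of_nonneg (norm_nonneg _), abs_of_nonneg (norm_nonneg _)] at h2
  -- sa t is a contraction
  have hnorm_sa : ∀ t : ℝ, 0 ≤ t → ∀ y : E, ‖sa t y‖ ≤ ‖y‖ := by
    intro t ht y
    have h1 : ‖sa t y‖ ^ 2 = ‖⟪s t (sa t y), y⟫‖ := by
      rw [CStarModuleOld.norm_sq_eq A, hadj t ht]
    have h2 : ‖⟪s t (sa t y), y⟫‖ ≤ ‖sa t y‖ * ‖y‖ := by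
      calc ‖⟪s t (sa t y), y⟫‖ ≤ ‖s t (sa t y)‖ * ‖y‖ := CStarModuleOld.norm_inner_le A
        _ = ‖sa t y‖ * ‖y‖ := by rw [hnorm_s t ht]
    nlinarith [norm_nonneg (sa t y), norm_nonneg y]
  -- extensionality via inner product
  have hext : ∀ a b : E, (∀ x : E, ⟪x, a⟫ = ⟪x, b⟫) → a = b := by
    intro a b h
    have h0 : ⟪a - b, a - b⟫ = 0 := by
      rw [CStarModuleOld.inner_sub_right A, h (a - b), sub_self]
    have h1 : ‖a - b‖ ^ 2 = 0 := by rw [CStarModuleOld.norm_sq_eq A, h0, norm_zero]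
    have h2 : ‖a - b‖ = 0 := by nlinarith [norm_nonneg (a - b)]
    exact sub_eq_zero.mp (norm_eq_zero.mp h2)
  -- sa t (s t y) = y
  have hid : ∀ t : ℝ, 0 ≤ t → ∀ y : E, sa t (s t y) = y := by
    intro t ht y
    refine (hext _ _ fun x => ?_).symm
    rw [← hadj t ht, hiso t ht]
  -- semigroup law for sa : sa (r + t) = sa t ∘ sa r
  have hsag : ∀ r t : ℝ, 0 ≤ r → 0 ≤ t → ∀ y : E, sa (r + t) y = sa t (sa r y) := by
    intro r t hr ht y
    refine hext _ _ fun x => ?_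
    rw [← hadj (r + t) (by linarith) x y, hsg r t hr ht]
    have : (s r).comp (s t) x = s r (s t x) := rfl
    rw [this, hadj r hr, hadj t ht]
  -- the main inequality
  have key : ∀ x : E, ∀ t : ℝ, 0 ≤ t → ‖sa t x - x‖ ≤ ‖x - s t x‖ := by
    intro x t ht
    have h1 : sa t x - x = sa t (x - s t x) := by
      rw [map_sub, hid t ht]
    rw [h1]
    exact hnorm_sa t ht _
  refine ⟨key, fun x => ?_⟩
  -- uniform estimate: ‖sa t x - sa t₀ x‖ ≤ ‖x - s |t - t₀| x‖ for t, t₀ ≥ 0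
  have est : ∀ t t₀ : ℝ, 0 ≤ t → 0 ≤ t₀ →
      ‖sa t x - sa t₀ x‖ ≤ ‖x - s |t - t₀| x‖ := by
    have aux : ∀ t t₀ : ℝ, 0 ≤ t₀ → t₀ ≤ t →
        ‖sa t x - sa t₀ x‖ ≤ ‖x - s (t - t₀) x‖ := by
      intro t t₀ ht₀ hle
      have hd : (0:ℝ) ≤ t - t₀ := by linarith
      have h1 : sa t x = sa t₀ (sa (t - t₀) x) := by
        rw [← hsag (t - t₀) t₀ hd ht₀ x, sub_add_cancel]
      have h2 : sa t x - sa t₀ x = sa t₀ (sa (t - t₀) x - x) := by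
        rw [map_sub, ← h1]
      rw [h2]
      calc ‖sa t₀ (sa (t - t₀) x - x)‖ ≤ ‖sa (t - t₀) x - x‖ := hnorm_sa t₀ ht₀ _
        _ ≤ ‖x - s (t - t₀) x‖ := key x _ hd
    intro t t₀ ht ht₀
    rcases le_total t₀ t with hle | hle
    · rw [abs_of_nonneg (by linarith : (0:ℝ) ≤ t - t₀)]
      exact aux t t₀ ht₀ hle
    · rw [abs_of_nonpos (by linarith : t - t₀ ≤ 0), neg_sub, ← norm_neg, neg_sub]
      exact aux t₀ t ht hle
  -- continuity of h ↦ ‖x - s h x‖ at 0 within Ici 0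
  have hcont0 : Tendsto (fun h : ℝ => ‖x - s h x‖) (𝓝[Set.Ici 0] 0) (𝓝 0) := by
    have h1 : ContinuousWithinAt (fun t : ℝ => s t x) (Set.Ici 0) 0 :=
      (hsc x) 0 (Set.self_mem_Ici)
    have h2 : Tendsto (fun h : ℝ => ‖x - s h x‖) (𝓝[Set.Ici 0] 0)
        (𝓝 ‖x - s 0 x‖) := (tendsto_const_nhds.sub h1).norm
    simpa [hs0] using h2
  intro t₀ ht₀
  rw [Metric.continuousWithinAt_iff]
  intro ε hε
  rw [Metric.tendsto_nhdsWithin_nhds] at hcont0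
  obtain ⟨δ, hδ, hδ'⟩ := hcont0 ε hε
  refine ⟨δ, hδ, fun t ht hdist => ?_⟩
  have habs : |t - t₀| ∈ Set.Ici (0:ℝ) := Set.mem_Ici.mpr (abs_nonneg _)
  have hd0 : dist |t - t₀| 0 < δ := by
    rw [Real.dist_eq, sub_zero, abs_abs]
    rwa [Real.dist_eq] at hdist
  have h3 := hδ' habs hd0
  rw [Real.dist_eq, sub_zero] at h3
  have h4 : ‖x - s |t - t₀| x‖ < ε := lt_of_abs_lt h3
  calc dist (sa t x) (sa t₀ x) = ‖sa t x - sa t₀ x‖ := dist_eq_norm _ _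
    _ ≤ ‖x - s |t - t₀| x‖ := est t t₀ ht ht₀
    _ < ε := h4
end
end

section
/- Let (s_t)_{t≥0} be a strongly continuous semigroup of adjointable isometries on a Hilbert C*-module E, and for 0 ≤ a < b define q_{a,b} x := (1/(b−a)) ∫_0^{b−a} u_t^{a,b} x dt, where u_t^{a,b} is the periodic shift unitary group on E_{a,b} = p_{a,b}E. Then u_r^{a,b} q_{a,b} = q_{a,b} for all real r, and q_{a,b} is an adjointable projection on E whose range is contained in the range of p_{a,b}. -/
open scoped RightActions
open MeasureTheory Filter Topology

noncomputable section

variable {A E : Type*} [CStarAlgebra A] [PartialOrder A] [StarOrderedRing A]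
  [NormedAddCommGroup E] [NormedSpace ℂ E] [SMul A E] [CStarModule A E]

local notation "⟪" x ", " y "⟫" => (inner A x y : A)

/-- The mean `q_{c,d} x := (d-c)⁻¹ ∫_0^{d-c} u_t^{c,d} x dt` of the periodic shift group
over one period (a Riemann/Bochner integral of a continuous function). -/
def qab {E : Type*} [NormedAddCommGroup E] [NormedSpace ℂ E]
    (s sa : ℝ → E →ₗ[ℂ] E) (c d : ℝ) (x : E) : E :=
  (d - c)⁻¹ • ∫ t in (0 : ℝ)..(d - c), uab s sa c d t x


/-! ### Auxiliary machinery -/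

set_option linter.unusedSectionVars false
set_option maxHeartbeats 1000000

section Aux

lemma cext_inner_left {x y : E} (h : ∀ z : E, ⟪z, x⟫ = ⟪z, y⟫) : x = y := by
  have h2 : ⟪x - y, x - y⟫ = 0 := by
    rw [CStarModule.inner_sub_right, h (x - y), sub_self]
  exact sub_eq_zero.mp (CStarModule.inner_self.mp h2)

/-- The real-linear continuous star map on `A`. -/
def starRCLM (A : Type*) [CStarAlgebra A] : A →L[ℝ] A :=
  ⟨{ toFun := star, map_add' := star_add, map_smul' := fun r a => by simp }, continuous_star⟩

lemma starRCLM_apply {A : Type*} [CStarAlgebra A] (a : A) : starRCLM A a = star a := rfl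

lemma lin_integral_comm [CompleteSpace E] {g : E →ₗ[ℂ] E} {C : ℝ}
    (hg : ∀ z : E, ‖g z‖ ≤ C * ‖z‖) {f : ℝ → E} {u v : ℝ}
    (hf : IntervalIntegrable f MeasureTheory.volume u v) :
    g (∫ t in u..v, f t) = ∫ t in u..v, g (f t) := by
  have h := (g.mkContinuous C hg).intervalIntegral_comp_comm hf
  simpa only [LinearMap.mkContinuous_apply] using h.symm

/-- The auxiliary continuous form of `uab` on one period. -/
def vmap (s sa : ℝ → E →ₗ[ℂ] E) (a b : ℝ) (τ : ℝ) (x : E) : E :=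
  s (a + τ) (sa a x - sa b x) + (s a (sa (b - τ) x) - s b (sa (b - τ) x))

section redt

lemma redt_eq_fract {a b : ℝ} (hab : a < b) (t : ℝ) :
    redt a b t = (b - a) * Int.fract (t / (b - a)) := by
  have hL : b - a ≠ 0 := (by linarith : (0:ℝ) < b - a).ne'
  unfold redt Int.fract
  rw [mul_sub]
  congr 1
  field_simp

lemma redt_mem_Ico {a b : ℝ} (hab : a < b) (t : ℝ) : redt a b t ∈ Set.Ico 0 (b - a) := by
  rw [redt_eq_fract hab]
  constructor
  · exact mul_nonneg (by linarith) (Int.fract_nonneg _)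
  · nlinarith [Int.fract_lt_one (t / (b - a)), Int.fract_nonneg (t / (b - a))]

lemma redt_of_mem {a b t : ℝ} (hab : a < b) (ht : t ∈ Set.Ico 0 (b - a)) : redt a b t = t := by
  unfold redt
  have h0 : ⌊t / (b - a)⌋ = 0 := by
    rw [Int.floor_eq_zero_iff]
    constructor
    · exact div_nonneg ht.1 (by linarith)
    · rw [div_lt_one (by linarith)]; simpa using ht.2
  rw [h0]
  norm_num

lemma redt_add_int {a b : ℝ} (hab : a < b) (t : ℝ) (n : ℤ) :
    redt a b (t + n * (b - a)) = redt a b t := by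
  rw [redt_eq_fract hab, redt_eq_fract hab]
  congr 1
  have hL : b - a ≠ 0 := (by linarith : (0:ℝ) < b - a).ne'
  have h : (t + n * (b - a)) / (b - a) = t / (b - a) + n := by
    field_simp
  rw [h, Int.fract_add_intCast]

lemma redt_redt_add {a b : ℝ} (hab : a < b) (r t : ℝ) :
    redt a b (redt a b r + redt a b t) = redt a b (r + t) := by
  have h1 : redt a b r + redt a b t
      = (r + t) + ((-(⌊r / (b - a)⌋ + ⌊t / (b - a)⌋) : ℤ) : ℝ) * (b - a) := by
    unfold redt; push_cast; ring
  rw [h1, redt_add_int hab]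

lemma redt_L {a b : ℝ} (hab : a < b) : redt a b (b - a) = 0 := by
  rw [show b - a = 0 + (1:ℤ) * (b - a) by push_cast; ring, redt_add_int hab,
    redt_of_mem hab ⟨le_refl 0, by linarith⟩]

end redt

variable (A) in
/-- Bundled hypotheses for a strongly continuous semigroup of adjointable isometries. -/
structure SgHyp (s sa : ℝ → E →ₗ[ℂ] E) : Prop where
  hs0 : s 0 = LinearMap.id
  hsg : ∀ r t : ℝ, 0 ≤ r → 0 ≤ t → s (r + t) = (s r).comp (s t)
  hiso : ∀ t : ℝ, 0 ≤ t → ∀ x y : E, ⟪s t x, s t y⟫ = ⟪x, y⟫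
  hadj : ∀ t : ℝ, 0 ≤ t → ∀ x y : E, ⟪s t x, y⟫ = ⟪x, sa t y⟫
  hsc : ∀ x : E, ContinuousOn (fun t : ℝ => s t x) (Set.Ici 0)

namespace SgHyp

variable {s sa : ℝ → E →ₗ[ℂ] E} (H : SgHyp A s sa)
include H

lemma hS {c d e : ℝ} (hc : 0 ≤ c) (hd : 0 ≤ d) (he : e = c + d) (x : E) :
    s c (s d x) = s e x := by
  rw [he, H.hsg c d hc hd]; rfl

lemma sa_s {t : ℝ} (ht : 0 ≤ t) (x : E) : sa t (s t x) = x := by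
  refine cext_inner_left (A := A) fun z => ?_
  rw [← H.hadj t ht, H.hiso t ht]

lemma hadj' {t : ℝ} (ht : 0 ≤ t) (x y : E) : ⟪sa t x, y⟫ = ⟪x, s t y⟫ := by
  rw [← CStarModule.star_inner, ← H.hadj t ht y x, CStarModule.star_inner]

lemma hAS {c d e : ℝ} (hd : 0 ≤ d) (hdc : d ≤ c) (he : e = c - d) (x : E) :
    sa d (s c x) = s e x := by
  refine cext_inner_left (A := A) fun z => ?_
  have h1 : s d (s e x) = s c x := by
    rw [H.hS hd (by rw [he]; linarith) (e := c) (by rw [he]; ring)]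
  calc ⟪z, sa d (s c x)⟫ = ⟪s d z, s c x⟫ := (H.hadj d hd z _).symm
    _ = ⟪s d z, s d (s e x)⟫ := by rw [h1]
    _ = ⟪z, s e x⟫ := H.hiso d hd _ _

lemma hAS' {c d e : ℝ} (hc : 0 ≤ c) (hcd : c ≤ d) (he : e = d - c) (x : E) :
    sa d (s c x) = sa e x := by
  refine cext_inner_left (A := A) fun z => ?_
  have he0 : 0 ≤ e := by rw [he]; linarith
  have h1 : s c (s e z) = s d z := by
    rw [H.hS hc he0 (e := d) (by rw [he]; ring)]
  calc ⟪z, sa d (s c x)⟫ = ⟪s d z, s c x⟫ := (H.hadj d (by linarith) z _).symm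
    _ = ⟪s c (s e z), s c x⟫ := by rw [h1]
    _ = ⟪s e z, x⟫ := H.hiso c hc _ _
    _ = ⟪z, sa e x⟫ := H.hadj e he0 _ _

lemma hA {c d e : ℝ} (hc : 0 ≤ c) (hd : 0 ≤ d) (he : e = c + d) (x : E) :
    sa c (sa d x) = sa e x := by
  refine cext_inner_left (A := A) fun z => ?_
  have h1 : s d (s c z) = s e z := by rw [H.hS hd hc (e := e) (by rw [he]; ring)]
  calc ⟪z, sa c (sa d x)⟫ = ⟪s c z, sa d x⟫ := (H.hadj c hc z _).symm
    _ = ⟪s d (s c z), x⟫ := (H.hadj d hd _ x).symm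
    _ = ⟪s e z, x⟫ := by rw [h1]
    _ = ⟪z, sa e x⟫ := H.hadj e (by rw [he]; linarith) z x

lemma norm_s {t : ℝ} (ht : 0 ≤ t) (x : E) : ‖s t x‖ = ‖x‖ := by
  rw [CStarModule.norm_eq_sqrt_norm_inner_self (A := A) (x := s t x), H.hiso t ht,
    ← CStarModule.norm_eq_sqrt_norm_inner_self (A := A)]

lemma norm_sa_le {t : ℝ} (ht : 0 ≤ t) (x : E) : ‖sa t x‖ ≤ ‖x‖ := by
  rcases eq_or_lt_of_le (norm_nonneg (sa t x)) with h0 | h0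
  · rw [← h0]; exact norm_nonneg x
  have h1 : ‖sa t x‖ ^ 2 = ‖⟪s t (sa t x), x⟫‖ := by
    rw [CStarModule.norm_sq_eq (A := A), H.hadj t ht]
  have h2 : ‖⟪s t (sa t x), x⟫‖ ≤ ‖s t (sa t x)‖ * ‖x‖ := CStarModule.norm_inner_le E
  rw [H.norm_s ht] at h2
  nlinarith [h1, h2]

lemma s_zero (x : E) : s 0 x = x := by rw [H.hs0]; rfl

lemma sa_zero (x : E) : sa 0 x = x := by
  have h := H.sa_s le_rfl x
  rwa [H.s_zero] at h

lemma sa_dist {c c' : ℝ} (hc' : 0 ≤ c') (hcc : c' ≤ c) (x : E) :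
    ‖sa c x - sa c' x‖ ≤ ‖s (c - c') x - x‖ := by
  have h1 : sa c x = sa c' (sa (c - c') x) := (H.hA hc' (by linarith) (by ring) x).symm
  have h2 : sa (c - c') (s (c - c') x) = x := H.sa_s (by linarith) x
  calc ‖sa c x - sa c' x‖ = ‖sa c' (sa (c - c') x - x)‖ := by rw [h1, map_sub]
    _ ≤ ‖sa (c - c') x - x‖ := H.norm_sa_le hc' _
    _ = ‖sa (c - c') (x - s (c - c') x)‖ := by rw [map_sub, h2]
    _ ≤ ‖x - s (c - c') x‖ := H.norm_sa_le (by linarith) _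
    _ = ‖s (c - c') x - x‖ := norm_sub_rev _ _

lemma cont_sa (x : E) : ContinuousOn (fun t : ℝ => sa t x) (Set.Ici 0) := by
  intro t₀ ht₀
  rw [Metric.continuousWithinAt_iff]
  intro ε hε
  have hT : Filter.Tendsto (fun h : ℝ => ‖s h x - x‖) (nhdsWithin 0 (Set.Ici 0)) (nhds 0) := by
    have h1 : ContinuousWithinAt (fun t : ℝ => s t x) (Set.Ici 0) 0 :=
      H.hsc x 0 (Set.mem_Ici.mpr le_rfl)
    have h2 : Filter.Tendsto (fun h : ℝ => s h x) (nhdsWithin 0 (Set.Ici 0)) (nhds x) := by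
      have h3 := h1.tendsto
      rwa [H.s_zero] at h3
    have h3 := (h2.sub_const x).norm
    simpa using h3
  rw [Metric.tendsto_nhdsWithin_nhds] at hT
  obtain ⟨δ, hδ, hδ'⟩ := hT ε hε
  refine ⟨δ, hδ, fun {t} ht htd => ?_⟩
  have key : ∀ c c' : ℝ, 0 ≤ c' → c' ≤ c → c - c' < δ → dist (sa c x) (sa c' x) < ε := by
    intro c c' h1 h2 h3
    have h4 := H.sa_dist h1 h2 x
    have h5 : dist (c - c') 0 < δ := by
      rw [Real.dist_eq, sub_zero, abs_of_nonneg (by linarith)]; exact h3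
    have h6 := hδ' (Set.mem_Ici.mpr (by linarith : (0:ℝ) ≤ c - c')) h5
    rw [Real.dist_eq, sub_zero, abs_of_nonneg (norm_nonneg _)] at h6
    rw [dist_eq_norm]
    exact lt_of_le_of_lt h4 h6
  rcases le_total t t₀ with hle | hle
  · have h7 : t₀ - t < δ := by
      rw [Real.dist_eq] at htd
      calc t₀ - t ≤ |t - t₀| := by rw [abs_sub_comm]; exact le_abs_self _
        _ < δ := htd
    rw [dist_comm]
    exact key t₀ t ht hle h7
  · have h7 : t - t₀ < δ := by
      rw [Real.dist_eq] at htd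
      calc t - t₀ ≤ |t - t₀| := le_abs_self _
        _ < δ := htd
    exact key t t₀ ht₀ hle h7

lemma uab_eq (ha : 0 ≤ a) (hab : a < b) (t : ℝ) (x : E) :
    uab s sa a b t x = vmap s sa a b (redt a b t) x := by
  obtain ⟨hτ0, hτL⟩ := redt_mem_Ico hab t
  set τ := redt a b t with hτdef
  have h1 : a ≤ b - τ := by linarith
  have h2 : b - τ ≤ b := by linarith
  simp only [uab, pab, ← hτdef, if_pos h1, if_pos h2]
  simp only [LinearMap.add_apply, LinearMap.comp_apply, LinearMap.sub_apply, map_sub]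
  rw [H.hS hτ0 ha (e := a + τ) (by ring) (sa a x),
    H.hS hτ0 (by linarith : (0:ℝ) ≤ b - τ) (e := b) (by ring) (sa (b - τ) x),
    H.hAS (by linarith : (0:ℝ) ≤ b - a - τ) (by linarith : b - a - τ ≤ b - τ) (e := a)
      (by ring) (sa (b - τ) x),
    H.hAS (by linarith : (0:ℝ) ≤ b - a - τ) (by linarith : b - a - τ ≤ b) (e := a + τ)
      (by ring) (sa b x)]
  simp only [vmap, map_sub]
  abel

lemma vmap_L (ha : 0 ≤ a) (hab : a < b) (x : E) :
    vmap s sa a b (b - a) x = vmap s sa a b 0 x := by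
  simp only [vmap, map_sub]
  rw [show a + (b - a) = b by ring, show b - (b - a) = a by ring, add_zero, sub_zero]
  abel

lemma uab_eq_on (ha : 0 ≤ a) (hab : a < b) {t : ℝ} (ht : t ∈ Set.Icc 0 (b - a)) (x : E) :
    uab s sa a b t x = vmap s sa a b t x := by
  rw [H.uab_eq ha hab]
  rcases eq_or_lt_of_le ht.2 with he | hlt
  · rw [he, redt_L hab, H.vmap_L ha hab]
  · rw [redt_of_mem hab ⟨ht.1, hlt⟩]

lemma sa_b_vmap (ha : 0 ≤ a) (hab : a < b) {τ : ℝ} (hτ0 : 0 ≤ τ) (hτL : τ ≤ b - a) (x : E) :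
    sa b (vmap s sa a b τ x) = 0 := by
  simp only [vmap, map_add, map_sub]
  rw [H.hAS' (by linarith : (0:ℝ) ≤ a + τ) (by linarith : a + τ ≤ b) (e := b - a - τ)
      (by ring) (sa a x),
    H.hAS' (by linarith : (0:ℝ) ≤ a + τ) (by linarith : a + τ ≤ b) (e := b - a - τ)
      (by ring) (sa b x),
    H.hA (by linarith : (0:ℝ) ≤ b - a - τ) ha (e := b - τ) (by ring) x,
    H.hA (by linarith : (0:ℝ) ≤ b - a - τ) (by linarith : (0:ℝ) ≤ b) (e := 2*b - a - τ)
      (by ring) x,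
    H.hAS' ha (by linarith : a ≤ b) (e := b - a) (by ring) (sa (b - τ) x),
    H.hA (by linarith : (0:ℝ) ≤ b - a) (by linarith : (0:ℝ) ≤ b - τ) (e := 2*b - a - τ)
      (by ring) x,
    H.sa_s (by linarith : (0:ℝ) ≤ b) (sa (b - τ) x)]
  abel

lemma sa_a_vmap (ha : 0 ≤ a) (hab : a < b) {τ : ℝ} (hτ0 : 0 ≤ τ) (hτL : τ ≤ b - a) (x : E) :
    sa a (vmap s sa a b τ x)
      = s τ (sa a x) - s τ (sa b x) + (sa (b - τ) x - s (b - a) (sa (b - τ) x)) := by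
  simp only [vmap, map_add, map_sub]
  rw [H.hAS ha (by linarith : a ≤ a + τ) (e := τ) (by ring) (sa a x),
    H.hAS ha (by linarith : a ≤ a + τ) (e := τ) (by ring) (sa b x),
    H.sa_s ha (sa (b - τ) x),
    H.hAS ha (by linarith : a ≤ b) (e := b - a) (by ring) (sa (b - τ) x)]

lemma sa_brho_vmap₁ (ha : 0 ≤ a) (hab : a < b) {ρ τ : ℝ} (hρ0 : 0 ≤ ρ) (hρL : ρ < b - a)
    (hτ0 : 0 ≤ τ) (hτL : τ < b - a) (hc : ρ + τ < b - a) (x : E) :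
    sa (b - ρ) (vmap s sa a b τ x)
      = sa (b - (ρ + τ)) x - s ρ (sa (b - τ) x) := by
  simp only [vmap, map_add, map_sub]
  rw [H.hAS' (by linarith : (0:ℝ) ≤ a + τ) (by linarith : a + τ ≤ b - ρ) (e := b - ρ - a - τ)
      (by ring) (sa a x),
    H.hAS' (by linarith : (0:ℝ) ≤ a + τ) (by linarith : a + τ ≤ b - ρ) (e := b - ρ - a - τ)
      (by ring) (sa b x),
    H.hA (by linarith : (0:ℝ) ≤ b - ρ - a - τ) ha (e := b - (ρ + τ)) (by ring) x,
    H.hA (by linarith : (0:ℝ) ≤ b - ρ - a - τ) (by linarith : (0:ℝ) ≤ b)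
      (e := 2*b - a - ρ - τ) (by ring) x,
    H.hAS' ha (by linarith : a ≤ b - ρ) (e := b - ρ - a) (by ring) (sa (b - τ) x),
    H.hA (by linarith : (0:ℝ) ≤ b - ρ - a) (by linarith : (0:ℝ) ≤ b - τ)
      (e := 2*b - a - ρ - τ) (by ring) x,
    H.hAS (by linarith : (0:ℝ) ≤ b - ρ) (by linarith : b - ρ ≤ b) (e := ρ)
      (by ring) (sa (b - τ) x)]
  abel

lemma sa_brho_vmap₂ (ha : 0 ≤ a) (hab : a < b) {ρ τ σ : ℝ} (hρ0 : 0 ≤ ρ) (hρL : ρ < b - a)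
    (hτ0 : 0 ≤ τ) (hτL : τ < b - a) (hσ : σ = ρ + τ - (b - a)) (hσ0 : 0 ≤ σ) (x : E) :
    sa (b - ρ) (vmap s sa a b τ x)
      = s σ (sa a x) - s σ (sa b x) + (sa (b - σ) x - s ρ (sa (b - τ) x)) := by
  simp only [vmap, map_add, map_sub]
  rw [H.hAS (by linarith : (0:ℝ) ≤ b - ρ) (by linarith : b - ρ ≤ a + τ) (e := σ)
      (by rw [hσ]; ring) (sa a x),
    H.hAS (by linarith : (0:ℝ) ≤ b - ρ) (by linarith : b - ρ ≤ a + τ) (e := σ)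
      (by rw [hσ]; ring) (sa b x),
    H.hAS' ha (by linarith : a ≤ b - ρ) (e := b - ρ - a) (by ring) (sa (b - τ) x),
    H.hA (by linarith : (0:ℝ) ≤ b - ρ - a) (by linarith : (0:ℝ) ≤ b - τ)
      (e := b - σ) (by rw [hσ]; ring) x,
    H.hAS (by linarith : (0:ℝ) ≤ b - ρ) (by linarith : b - ρ ≤ b) (e := ρ)
      (by ring) (sa (b - τ) x)]

lemma vmap_comp (ha : 0 ≤ a) (hab : a < b) {ρ τ : ℝ} (hρ : ρ ∈ Set.Ico 0 (b - a))
    (hτ : τ ∈ Set.Ico 0 (b - a)) (x : E) :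
    vmap s sa a b ρ (vmap s sa a b τ x) = vmap s sa a b (redt a b (ρ + τ)) x := by
  obtain ⟨hρ0, hρL⟩ := hρ
  obtain ⟨hτ0, hτL⟩ := hτ
  rcases lt_or_ge (ρ + τ) (b - a) with hc | hc
  · rw [redt_of_mem hab ⟨by linarith, hc⟩]
    conv_lhs => rw [vmap]
    rw [H.sa_a_vmap ha hab hτ0 (le_of_lt hτL) x, H.sa_b_vmap ha hab hτ0 (le_of_lt hτL) x,
      H.sa_brho_vmap₁ ha hab hρ0 hρL hτ0 hτL hc x]
    simp only [map_add, map_sub, map_zero, sub_zero]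
    rw [H.hS (by linarith : (0:ℝ) ≤ a + ρ) hτ0 (e := a + (ρ + τ)) (by ring) (sa a x),
      H.hS (by linarith : (0:ℝ) ≤ a + ρ) hτ0 (e := a + (ρ + τ)) (by ring) (sa b x),
      H.hS (by linarith : (0:ℝ) ≤ a + ρ) (by linarith : (0:ℝ) ≤ b - a) (e := b + ρ)
        (by ring) (sa (b - τ) x),
      H.hS ha hρ0 (e := a + ρ) (by ring) (sa (b - τ) x),
      H.hS (by linarith : (0:ℝ) ≤ b) hρ0 (e := b + ρ) (by ring) (sa (b - τ) x)]
    simp only [vmap, map_sub]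
    abel
  · set σ := redt a b (ρ + τ) with hσdef
    have hσ : σ = ρ + τ - (b - a) := by
      rw [hσdef, show ρ + τ = (ρ + τ - (b - a)) + (1:ℤ) * (b - a) by push_cast; ring,
        redt_add_int hab, redt_of_mem hab ⟨by linarith, by linarith⟩]
      push_cast
      ring
    have hσ0 : 0 ≤ σ := by rw [hσ]; linarith
    conv_lhs => rw [vmap]
    rw [H.sa_a_vmap ha hab hτ0 (le_of_lt hτL) x, H.sa_b_vmap ha hab hτ0 (le_of_lt hτL) x,
      H.sa_brho_vmap₂ ha hab hρ0 hρL hτ0 hτL hσ hσ0 x]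
    simp only [map_add, map_sub, map_zero, sub_zero]
    rw [H.hS (by linarith : (0:ℝ) ≤ a + ρ) hτ0 (e := b + σ) (by rw [hσ]; ring) (sa a x),
      H.hS (by linarith : (0:ℝ) ≤ a + ρ) hτ0 (e := b + σ) (by rw [hσ]; ring) (sa b x),
      H.hS (by linarith : (0:ℝ) ≤ a + ρ) (by linarith : (0:ℝ) ≤ b - a) (e := b + ρ)
        (by ring) (sa (b - τ) x),
      H.hS ha hσ0 (e := a + σ) (by ring) (sa a x),
      H.hS ha hσ0 (e := a + σ) (by ring) (sa b x),
      H.hS ha hρ0 (e := a + ρ) (by ring) (sa (b - τ) x),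
      H.hS (by linarith : (0:ℝ) ≤ b) hσ0 (e := b + σ) (by ring) (sa a x),
      H.hS (by linarith : (0:ℝ) ≤ b) hσ0 (e := b + σ) (by ring) (sa b x),
      H.hS (by linarith : (0:ℝ) ≤ b) hρ0 (e := b + ρ) (by ring) (sa (b - τ) x)]
    simp only [vmap, map_sub]
    abel

lemma inner_vmap (ha : 0 ≤ a) (hab : a < b) {τ : ℝ} (hτ0 : 0 ≤ τ) (hτL : τ ≤ b - a)
    (x y : E) :
    ⟪vmap s sa a b τ x, y⟫ = ⟪x, vmap s sa a b (b - a - τ) y⟫ := by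
  have hb : (0:ℝ) ≤ b := by linarith
  have hbτ : (0:ℝ) ≤ b - τ := by linarith
  have haτ : (0:ℝ) ≤ a + τ := by linarith
  simp only [vmap, map_sub]
  rw [show a + (b - a - τ) = b - τ by ring, show b - (b - a - τ) = a + τ by ring]
  simp only [CStarModule.inner_add_left, CStarModule.inner_sub_left,
    CStarModule.inner_add_right, CStarModule.inner_sub_right]
  rw [H.hadj (a + τ) haτ (sa a x) y, H.hadj (a + τ) haτ (sa b x) y,
    H.hadj a ha (sa (b - τ) x) y, H.hadj b hb (sa (b - τ) x) y,
    H.hadj' (t := a) ha x (sa (a + τ) y), H.hadj' (t := b) hb x (sa (a + τ) y),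
    H.hadj' (t := b - τ) hbτ x (sa a y), H.hadj' (t := b - τ) hbτ x (sa b y)]
  abel

lemma pab_vmap (ha : 0 ≤ a) (hab : a < b) {τ : ℝ} (hτ0 : 0 ≤ τ) (hτL : τ ≤ b - a) (x : E) :
    pab s sa a b (vmap s sa a b τ x) = vmap s sa a b τ x := by
  simp only [pab, if_pos (le_of_lt hab), LinearMap.sub_apply, LinearMap.comp_apply]
  rw [H.sa_b_vmap ha hab hτ0 hτL x, map_zero, sub_zero, H.sa_a_vmap ha hab hτ0 hτL x]
  simp only [map_add, map_sub]
  rw [H.hS ha hτ0 (e := a + τ) (by ring) (sa a x),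
    H.hS ha hτ0 (e := a + τ) (by ring) (sa b x),
    H.hS ha (by linarith : (0:ℝ) ≤ b - a) (e := b) (by ring) (sa (b - τ) x)]
  simp only [vmap, map_sub]

lemma norm_vmap_le (ha : 0 ≤ a) (hab : a < b) {τ : ℝ} (hτ0 : 0 ≤ τ) (hτL : τ ≤ b - a)
    (x : E) : ‖vmap s sa a b τ x‖ ≤ 4 * ‖x‖ := by
  have hb : (0:ℝ) ≤ b := by linarith
  have h1 : ‖s (a + τ) (sa a x - sa b x)‖ ≤ 2 * ‖x‖ := by
    rw [H.norm_s (by linarith)]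
    calc ‖sa a x - sa b x‖ ≤ ‖sa a x‖ + ‖sa b x‖ := norm_sub_le _ _
      _ ≤ ‖x‖ + ‖x‖ := add_le_add (H.norm_sa_le ha x) (H.norm_sa_le hb x)
      _ = 2 * ‖x‖ := by ring
  have h2 : ‖s a (sa (b - τ) x)‖ ≤ ‖x‖ := by
    rw [H.norm_s ha]; exact H.norm_sa_le (by linarith) x
  have h3 : ‖s b (sa (b - τ) x)‖ ≤ ‖x‖ := by
    rw [H.norm_s hb]; exact H.norm_sa_le (by linarith) x
  calc ‖vmap s sa a b τ x‖
      ≤ ‖s (a + τ) (sa a x - sa b x)‖ + ‖s a (sa (b - τ) x) - s b (sa (b - τ) x)‖ :=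
        norm_add_le _ _
    _ ≤ 2 * ‖x‖ + (‖x‖ + ‖x‖) := by
        refine add_le_add h1 (le_trans (norm_sub_le _ _) (add_le_add h2 h3))
    _ = 4 * ‖x‖ := by ring

lemma uab_bound (ha : 0 ≤ a) (hab : a < b) (r : ℝ) (x : E) :
    ‖uab s sa a b r x‖ ≤ 4 * ‖x‖ := by
  obtain ⟨h0, hL⟩ := redt_mem_Ico hab r
  rw [H.uab_eq ha hab]
  exact H.norm_vmap_le ha hab h0 (le_of_lt hL) x

lemma cont_vmap (ha : 0 ≤ a) (hab : a < b) (x : E) :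
    ContinuousOn (fun τ => vmap s sa a b τ x) (Set.Icc 0 (b - a)) := by
  have hb : (0:ℝ) ≤ b := by linarith
  have hca : Continuous fun y : E => s a y :=
    AddMonoidHomClass.continuous_of_bound (s a) 1 (fun y => by rw [H.norm_s ha, one_mul])
  have hcb : Continuous fun y : E => s b y :=
    AddMonoidHomClass.continuous_of_bound (s b) 1 (fun y => by rw [H.norm_s hb, one_mul])
  have c1 : ContinuousOn (fun τ : ℝ => s (a + τ) (sa a x - sa b x)) (Set.Icc 0 (b - a)) := by
    refine (H.hsc (sa a x - sa b x)).comp (by fun_prop) ?_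
    intro τ hτ
    exact Set.mem_Ici.mpr (by linarith [hτ.1])
  have c2 : ContinuousOn (fun τ : ℝ => sa (b - τ) x) (Set.Icc 0 (b - a)) := by
    refine (H.cont_sa x).comp (by fun_prop) ?_
    intro τ hτ
    exact Set.mem_Ici.mpr (by linarith [hτ.2])
  exact c1.add ((hca.comp_continuousOn c2).sub (hcb.comp_continuousOn c2))

lemma cont_uab_fun (ha : 0 ≤ a) (hab : a < b) (x : E) :
    ContinuousOn (fun t => uab s sa a b t x) (Set.Icc 0 (b - a)) :=
  (H.cont_vmap ha hab x).congr (fun t ht => H.uab_eq_on ha hab ht x)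

lemma intInt_uab [CompleteSpace E] (ha : 0 ≤ a) (hab : a < b) (x : E) :
    IntervalIntegrable (fun t => uab s sa a b t x) MeasureTheory.volume 0 (b - a) := by
  apply ContinuousOn.intervalIntegrable
  rw [Set.uIcc_of_le (by linarith : (0:ℝ) ≤ b - a)]
  exact H.cont_uab_fun ha hab x

lemma uab_group (ha : 0 ≤ a) (hab : a < b) (r t : ℝ) (x : E) :
    uab s sa a b r (uab s sa a b t x) = uab s sa a b (r + t) x := by
  rw [H.uab_eq ha hab t x, H.uab_eq ha hab r (vmap s sa a b (redt a b t) x),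
    H.uab_eq ha hab (r + t) x,
    H.vmap_comp ha hab (redt_mem_Ico hab r) (redt_mem_Ico hab t) x, redt_redt_add hab]

end SgHyp

lemma uab_periodic {a b : ℝ} {s sa : ℝ → E →ₗ[ℂ] E} (hab : a < b) (x : E) :
    Function.Periodic (fun t => uab s sa a b t x) (b - a) := by
  intro t
  have h : redt a b (t + (b - a)) = redt a b t := by
    rw [show t + (b - a) = t + (1:ℤ) * (b - a) by push_cast; ring, redt_add_int hab]
  simp only [uab, h]

end Aux

theorem qab_is_invariant_mean_projection
    [CompleteSpace E]
    (s sa : ℝ → E →ₗ[ℂ] E)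
    (hs0 : s 0 = LinearMap.id)
    (hsg : ∀ r t : ℝ, 0 ≤ r → 0 ≤ t → s (r + t) = (s r).comp (s t))
    (hiso : ∀ t : ℝ, 0 ≤ t → ∀ x y : E, ⟪s t x, s t y⟫ = ⟪x, y⟫)
    (hadj : ∀ t : ℝ, 0 ≤ t → ∀ x y : E, ⟪s t x, y⟫ = ⟪x, sa t y⟫)
    (hsc : ∀ x : E, ContinuousOn (fun t : ℝ => s t x) (Set.Ici 0))
    (a b : ℝ) (ha : 0 ≤ a) (hab : a < b) :
    (∀ r : ℝ, ∀ x : E, uab s sa a b r (qab s sa a b x) = qab s sa a b x) ∧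
    (∀ x y : E, qab s sa a b (x + y) = qab s sa a b x + qab s sa a b y) ∧
    (∀ (c : ℂ) (x : E), qab s sa a b (c • x) = c • qab s sa a b x) ∧
    (∀ x : E, qab s sa a b (qab s sa a b x) = qab s sa a b x) ∧
    (∀ x y : E, ⟪qab s sa a b x, y⟫ = ⟪x, qab s sa a b y⟫) ∧
    (∀ x : E, ∃ y : E, qab s sa a b x = pab s sa a b y) := by
  have H : SgHyp A s sa := ⟨hs0, hsg, hiso, hadj, hsc⟩
  have hL : (0:ℝ) < b - a := by linarith
  have hL0 : (0:ℝ) ≤ b - a := le_of_lt hL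
  have hqab : ∀ z : E, qab s sa a b z
      = (b - a)⁻¹ • ∫ t in (0:ℝ)..(b - a), uab s sa a b t z := fun z => rfl
  have hG1 : ∀ r : ℝ, ∀ x : E, uab s sa a b r (qab s sa a b x) = qab s sa a b x := by
    intro r x
    have hInt := H.intInt_uab ha hab x
    rw [hqab x, LinearMap.map_smul_of_tower,
      lin_integral_comm (H.uab_bound ha hab r) hInt]
    congr 1
    calc ∫ t in (0:ℝ)..(b - a), uab s sa a b r (uab s sa a b t x)
        = ∫ t in (0:ℝ)..(b - a), uab s sa a b (r + t) x := by
          simp only [H.uab_group ha hab r]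
      _ = ∫ t in (r + 0)..(r + (b - a)), uab s sa a b t x := by
          rw [intervalIntegral.integral_comp_add_left (fun t => uab s sa a b t x) r]
      _ = ∫ t in (0:ℝ)..(0 + (b - a)), uab s sa a b t x := by
          rw [add_zero]
          exact (uab_periodic hab x).intervalIntegral_add_eq r 0
      _ = ∫ t in (0:ℝ)..(b - a), uab s sa a b t x := by rw [zero_add]
  refine ⟨hG1, ?_, ?_, ?_, ?_, ?_⟩
  · -- additivity
    intro x y
    rw [hqab x, hqab y, hqab (x + y)]
    simp only [map_add]
    rw [intervalIntegral.integral_add (H.intInt_uab ha hab x) (H.intInt_uab ha hab y),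
      smul_add]
  · -- ℂ-homogeneity
    intro c x
    rw [hqab x, hqab (c • x)]
    simp only [_root_.map_smul]
    rw [intervalIntegral.integral_smul, smul_comm]
  · -- idempotence
    intro x
    have hconst : ∀ t : ℝ, uab s sa a b t (qab s sa a b x) = qab s sa a b x :=
      fun t => hG1 t x
    calc qab s sa a b (qab s sa a b x)
        = (b - a)⁻¹ • ∫ t in (0:ℝ)..(b - a), uab s sa a b t (qab s sa a b x) := rfl
      _ = (b - a)⁻¹ • ∫ _t in (0:ℝ)..(b - a), qab s sa a b x := by simp only [hconst]
      _ = qab s sa a b x := by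
          rw [intervalIntegral.integral_const, sub_zero, smul_smul,
            inv_mul_cancel₀ (ne_of_gt hL), one_smul]
  · -- self-adjointness
    intro x y
    have hIx := H.intInt_uab ha hab x
    have hIvy : IntervalIntegrable (fun t => vmap s sa a b t y) MeasureTheory.volume 0 (b - a) := by
      apply ContinuousOn.intervalIntegrable
      rw [Set.uIcc_of_le hL0]
      exact H.cont_vmap ha hab y
    have hIfy : IntervalIntegrable (fun t => ⟪y, uab s sa a b t x⟫) MeasureTheory.volume
        0 (b - a) := by
      apply ContinuousOn.intervalIntegrable
      rw [Set.uIcc_of_le hL0]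
      exact (CStarModule.innerSL (E := E) y).continuous.comp_continuousOn
        (H.cont_uab_fun ha hab x)
    have hinner_pull_y : ⟪y, ∫ t in (0:ℝ)..(b - a), uab s sa a b t x⟫
        = ∫ t in (0:ℝ)..(b - a), ⟪y, uab s sa a b t x⟫ := by
      have h := (CStarModule.innerSL (A := A) (E := E) y).intervalIntegral_comp_comm hIx
      simp only [CStarModule.innerSL_apply] at h
      exact h.symm
    have hstar_pull : star (∫ t in (0:ℝ)..(b - a), ⟪y, uab s sa a b t x⟫)
        = ∫ t in (0:ℝ)..(b - a), star ⟪y, uab s sa a b t x⟫ := by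
      have h := (starRCLM A).intervalIntegral_comp_comm hIfy
      simp only [starRCLM_apply] at h
      exact h.symm
    have hinner_pull_x : ⟪x, ∫ t in (0:ℝ)..(b - a), vmap s sa a b t y⟫
        = ∫ t in (0:ℝ)..(b - a), ⟪x, vmap s sa a b t y⟫ := by
      have h := (CStarModule.innerSL (A := A) (E := E) x).intervalIntegral_comp_comm hIvy
      simp only [CStarModule.innerSL_apply] at h
      exact h.symm
    calc ⟪qab s sa a b x, y⟫
        = star ⟪y, qab s sa a b x⟫ := (CStarModule.star_inner _ _).symm
      _ = star ((b - a)⁻¹ • ⟪y, ∫ t in (0:ℝ)..(b - a), uab s sa a b t x⟫) := by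
          rw [hqab x, CStarModule.inner_smul_right_real]
      _ = (b - a)⁻¹ • ∫ t in (0:ℝ)..(b - a), star ⟪y, uab s sa a b t x⟫ := by
          rw [star_smul, star_trivial, hinner_pull_y, hstar_pull]
      _ = (b - a)⁻¹ • ∫ t in (0:ℝ)..(b - a), ⟪x, vmap s sa a b (b - a - t) y⟫ := by
          congr 1
          apply intervalIntegral.integral_congr
          intro t ht
          dsimp only
          rw [Set.uIcc_of_le hL0] at ht
          rw [CStarModule.star_inner, H.uab_eq_on ha hab ht x,
            H.inner_vmap ha hab ht.1 ht.2 x y]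
      _ = (b - a)⁻¹ • ∫ t in (0:ℝ)..(b - a), ⟪x, vmap s sa a b t y⟫ := by
          congr 1
          have h := intervalIntegral.integral_comp_sub_left
            (a := (0:ℝ)) (b := b - a) (fun t => ⟪x, vmap s sa a b t y⟫) (b - a)
          simpa using h
      _ = (b - a)⁻¹ • ⟪x, ∫ t in (0:ℝ)..(b - a), vmap s sa a b t y⟫ := by
          rw [hinner_pull_x]
      _ = ⟪x, qab s sa a b y⟫ := by
          rw [hqab y, CStarModule.inner_smul_right_real]
          congr 2
          apply intervalIntegral.integral_congr
          intro t ht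
          dsimp only
          rw [Set.uIcc_of_le hL0] at ht
          exact (H.uab_eq_on ha hab ht y).symm
  · -- range contained in range of pab
    intro x
    refine ⟨qab s sa a b x, ?_⟩
    have hInt := H.intInt_uab ha hab x
    have hpb : ∀ z : E, ‖pab s sa a b z‖ ≤ 2 * ‖z‖ := by
      intro z
      simp only [pab, if_pos (le_of_lt hab), LinearMap.sub_apply, LinearMap.comp_apply]
      calc ‖s a (sa a z) - s b (sa b z)‖
          ≤ ‖s a (sa a z)‖ + ‖s b (sa b z)‖ := norm_sub_le _ _
        _ ≤ ‖z‖ + ‖z‖ := by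
            rw [H.norm_s ha, H.norm_s (by linarith : (0:ℝ) ≤ b)]
            exact add_le_add (H.norm_sa_le ha z) (H.norm_sa_le (by linarith) z)
        _ = 2 * ‖z‖ := by ring
    have key : pab s sa a b (qab s sa a b x) = qab s sa a b x := by
      rw [hqab x, LinearMap.map_smul_of_tower, lin_integral_comm hpb hInt]
      congr 1
      apply intervalIntegral.integral_congr
      intro t ht
      dsimp only
      rw [Set.uIcc_of_le hL0] at ht
      rw [H.uab_eq_on ha hab ht x, H.pab_vmap ha hab ht.1 ht.2 x,
        ← H.uab_eq_on ha hab ht x]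
    exact key.symm
end
end
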